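/- Let G be a connected graph, let χ = WL²(G), and let C ⊆ C_E(G,χ) be a locally determined set of edge colors such that G[C] is disconnected. Let A be the vertex set of a connected component of G[C]. Then there exist a χ-invariant set W ⊆ V(G) and the vertex set Z of a connected component of G − A such that V(G[C]) \ A ⊆ Z and N_G(Z) = W ∩ A. -/

import Mathlib

namespace WL

open SimpleGraph

/-! ### Iterated colorings of the 2-dimensional Weisfeiler--Leman algorithm

`WLColor C n` is the domain of colors after `n` refinement rounds of 2-WL, where the
input graph carries an arc/pair coloring with values in `C`.  The initial color of a
pair records its ordered isomorphism type (equality pattern, adjacency in both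
directions) together with its input color. -/

def WLColor (C : Type) : ℕ → Type :=
  fun n => Nat.rec (Prop × Prop × Prop × C) (fun _ ih => ih × Multiset (ih × ih)) n

/-- The coloring of ordered pairs computed by 2-WL after `n` rounds on the (directed)
graph with adjacency relation `A` and input pair coloring `κ`. -/
def wlRound {V C : Type} [Fintype V] (A : V → V → Prop) (κ : V → V → C) :
    (n : ℕ) → V × V → WLColor C n
  | 0 => fun p => (p.1 = p.2, A p.1 p.2, A p.2 p.1, κ p.1 p.2)
  | n + 1 => fun p =>
      (wlRound A κ n p,
        Finset.univ.val.map fun u => (wlRound A κ n (u, p.2), wlRound A κ n (p.1, u)))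

/-- Equality of the stable 2-WL colors of a pair `p` of the arc/pair-colored graph
`(A, κ)` and a pair `q` of the arc/pair-colored graph `(B, κ')` (the stable colors
agree iff the colors agree after every finite number of rounds). -/
def wl2EqC {V W C : Type} [Fintype V] [Fintype W]
    (A : V → V → Prop) (κ : V → V → C) (B : W → W → Prop) (κ' : W → W → C)
    (p : V × V) (q : W × W) : Prop :=
  ∀ n, wlRound A κ n p = wlRound B κ' n q

/-- Equality of stable 2-WL colors across two (uncolored) graphs. -/
def wl2Eq {V W : Type} [Fintype V] [Fintype W] (A : V → V → Prop) (B : W → W → Prop)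
    (p : V × V) (q : W × W) : Prop :=
  wl2EqC A (fun _ _ => ()) B (fun _ _ => ()) p q

/-- `wl2 A p q`: the pairs `p` and `q` receive the same color in the stable coloring
`WL²` computed by 2-WL on the graph with adjacency relation `A`. -/
def wl2 {V : Type} [Fintype V] (A : V → V → Prop) (p q : V × V) : Prop :=
  wl2Eq A A p q

/-- Having the same stable 2-WL color is an equivalence relation on pairs. -/
def wl2Setoid {V : Type} [Fintype V] (A : V → V → Prop) : Setoid (V × V) :=
  ⟨wl2 A, ⟨fun _ _ => rfl, fun h n => (h n).symm, fun h₁ h₂ n => (h₁ n).trans (h₂ n)⟩⟩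

/-! ### Color refinement (1-WL) on pair-colored graphs, and the set `Disc` -/

def WL1Color (C : Type) : ℕ → Type :=
  fun n => Nat.rec (List Prop) (fun _ ih => ih × Multiset (ih × C × C)) n

/-- The vertex coloring computed by 1-WL (color refinement) after `n` rounds, on the
complete graph whose pairs are colored by `κ`, where the vertices in the list `vs`
are individualized. -/
def wl1Round {V C : Type} [Fintype V] (κ : V → V → C) (vs : List V) :
    (n : ℕ) → V → WL1Color C n
  | 0 => fun v => vs.map fun x => (x = v : Prop)
  | n + 1 => fun v =>
      (wl1Round κ vs n v,
        Finset.univ.val.map fun w => (wl1Round κ vs n w, κ v w, κ w v))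

/-- `discSet A vs = Disc_G(vs)`: the set of vertices lying in singleton color classes
of the stable coloring computed by 1-WL on the graph with adjacency relation `A`,
where every pair of vertices is initially colored by its `WL²` color and the
vertices of `vs` are individualized. -/
def discSet {V : Type} [Fintype V] (A : V → V → Prop) (vs : List V) : Set V :=
  {v | ∀ w,
    (∀ n, wl1Round (fun x y => Quotient.mk (wl2Setoid A) (x, y)) vs n w =
          wl1Round (fun x y => Quotient.mk (wl2Setoid A) (x, y)) vs n v) → w = v}

/-! ### The k-dimensional Weisfeiler--Leman algorithm -/

def WLkColor (k : ℕ) : ℕ → Type :=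
  fun n => Nat.rec (Fin k → Fin k → Prop × Prop) (fun _ ih => ih × Multiset (Fin k → ih)) n

/-- The coloring of `k`-tuples computed by `k`-WL after `n` rounds on the graph with
adjacency relation `A`. -/
def wlkRound {V : Type} [Fintype V] (A : V → V → Prop) (k : ℕ) :
    (n : ℕ) → (Fin k → V) → WLkColor k n
  | 0 => fun t i j => (t i = t j, A (t i) (t j))
  | n + 1 => fun t =>
      (wlkRound A k n t,
        Finset.univ.val.map fun w => fun i => wlkRound A k n (Function.update t i w))

/-! ### Minors, planarity, connectivity -/

/-- `H` is a minor of `G`, via disjoint nonempty connected branch sets. -/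
def IsMinor {V W : Type} (G : SimpleGraph V) (H : SimpleGraph W) : Prop :=
  ∃ f : W → Set V,
    (∀ w, (f w).Nonempty) ∧
    (∀ w, (G.induce (f w)).Preconnected) ∧
    (∀ w₁ w₂, w₁ ≠ w₂ → Disjoint (f w₁) (f w₂)) ∧
    (∀ w₁ w₂, H.Adj w₁ w₂ → ∃ v₁ ∈ f w₁, ∃ v₂ ∈ f w₂, G.Adj v₁ v₂)

/-- Planarity, via Wagner's theorem: neither `K₅` nor `K₃,₃` is a minor. -/
def IsPlanar {V : Type} (G : SimpleGraph V) : Prop :=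
  ¬ IsMinor G (completeGraph (Fin 5)) ∧
  ¬ IsMinor G (completeBipartiteGraph (Fin 3) (Fin 3))

/-- `S` is a separator of `G`: deleting `S` increases the number of connected
components. -/
def IsSeparator {V : Type} (G : SimpleGraph V) (S : Set V) : Prop :=
  Nat.card G.ConnectedComponent < Nat.card (G.induce Sᶜ).ConnectedComponent

/-- `G` is 3-connected: it is connected and has no separator of size at most 2. -/
def ThreeConnected {V : Type} (G : SimpleGraph V) : Prop :=
  G.Connected ∧ ∀ S : Set V, S.ncard ≤ 2 → ¬ IsSeparator G S

/-! ### Subgraphs induced by WL² edge colors; types of edge colors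

An edge color of `WL²(G)` is represented by a pair `c : V × V` with `G.Adj c.1 c.2`;
the color itself is the `wl2`-equivalence class of `c`. -/

/-- `c` (i.e. the `WL²`-class of `c`) is an edge color of `G`. -/
def EdgeColor {V : Type} (G : SimpleGraph V) (c : V × V) : Prop := G.Adj c.1 c.2

/-- The graph `G[c]` (on the full vertex set): edges are pairs of one of whose
orientations has `WL²`-color `c`. -/
def colorGraph {V : Type} [Fintype V] (G : SimpleGraph V) (c : V × V) : SimpleGraph V :=
  SimpleGraph.fromRel fun v w => G.Adj v w ∧ wl2 G.Adj (v, w) c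

/-- The graph `G[{c,d}]` (on the full vertex set). -/
def colorGraph2 {V : Type} [Fintype V] (G : SimpleGraph V) (c d : V × V) : SimpleGraph V :=
  SimpleGraph.fromRel fun v w => G.Adj v w ∧ (wl2 G.Adj (v, w) c ∨ wl2 G.Adj (v, w) d)

/-- A graph restricted to its support (the set of non-isolated vertices); used to
realize color subgraphs `G[C]` whose vertex set is the set of endpoints of their
edges. -/
def onSupport {V : Type} (H : SimpleGraph V) : SimpleGraph ↥H.support :=
  H.induce H.support

def colorGraphOn {V : Type} [Fintype V] (G : SimpleGraph V) (c : V × V) :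
    SimpleGraph ↥(colorGraph G c).support :=
  onSupport (colorGraph G c)

def colorGraph2On {V : Type} [Fintype V] (G : SimpleGraph V) (c d : V × V) :
    SimpleGraph ↥(colorGraph2 G c d).support :=
  onSupport (colorGraph2 G c d)

/-- The vertex set of the connected component of `H` containing `v`. -/
def compVerts {V : Type} (H : SimpleGraph V) (v : V) : Set V := {w | H.Reachable v w}

/-- The edge set of the connected component of `H` containing `v`. -/
def compEdges {V : Type} (H : SimpleGraph V) (v : V) : Set (Sym2 V) :=
  {e | e ∈ H.edgeSet ∧ ∀ x ∈ e, H.Reachable v x}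

/-- Type I: every connected component is a tree (one face). -/
def TypeI {V : Type} (H : SimpleGraph V) : Prop :=
  ∀ v ∈ H.support, (compEdges H v).ncard + 1 = (compVerts H v).ncard

/-- Type II: every connected component has exactly as many edges as vertices,
i.e. is a cycle (two faces). -/
def TypeII {V : Type} (H : SimpleGraph V) : Prop :=
  ∀ v ∈ H.support, (compEdges H v).ncard = (compVerts H v).ncard

/-- Type III: every connected component has more edges than vertices
(at least three faces). -/
def TypeIII {V : Type} (H : SimpleGraph V) : Prop :=
  ∀ v ∈ H.support, (compVerts H v).ncard < (compEdges H v).ncard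

/-- `G[c]` is unicolored: all its vertices get the same `WL²` vertex color. -/
def Unicolored {V : Type} [Fintype V] (G : SimpleGraph V) (c : V × V) : Prop :=
  ∀ v ∈ (colorGraph G c).support, ∀ w ∈ (colorGraph G c).support, wl2 G.Adj (v, v) (w, w)

/-- `G[c]` is bicolored: exactly two `WL²` vertex colors occur on it. -/
def Bicolored {V : Type} [Fintype V] (G : SimpleGraph V) (c : V × V) : Prop :=
  (∃ v ∈ (colorGraph G c).support, ∃ w ∈ (colorGraph G c).support,
      ¬ wl2 G.Adj (v, v) (w, w)) ∧
  (∀ x ∈ (colorGraph G c).support, ∀ y ∈ (colorGraph G c).support,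
      ∀ z ∈ (colorGraph G c).support,
      wl2 G.Adj (x, x) (y, y) ∨ wl2 G.Adj (x, x) (z, z) ∨ wl2 G.Adj (y, y) (z, z))

/-- Type IIc: `c` has Type II, `G[c]` is unicolored, and the relation
`χ(v,w) = c` is not symmetric (the components of `G[c]` are directed cycles). -/
def HasTypeIIc {V : Type} [Fintype V] (G : SimpleGraph V) (c : V × V) : Prop :=
  TypeII (colorGraph G c) ∧ Unicolored G c ∧
    ∃ v w : V, wl2 G.Adj (v, w) c ∧ ¬ wl2 G.Adj (w, v) c

/-- Type IIa: `c` has Type II but not Type IIc, and `G[c]` is disconnected. -/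
def HasTypeIIa {V : Type} [Fintype V] (G : SimpleGraph V) (c : V × V) : Prop :=
  TypeII (colorGraph G c) ∧ ¬ HasTypeIIc G c ∧ ¬ (colorGraphOn G c).Connected

/-- The graph `G` has Type IIa: some edge color has Type IIa and every edge color
has Type I or Type IIa. -/
def GraphTypeIIa {V : Type} [Fintype V] (G : SimpleGraph V) : Prop :=
  (∃ c : V × V, EdgeColor G c ∧ HasTypeIIa G c) ∧
  (∀ c : V × V, EdgeColor G c → (TypeI (colorGraph G c) ∨ HasTypeIIa G c))

/-- The edge color `c` defines a matching. -/
def DefinesMatching {V : Type} [Fintype V] (G : SimpleGraph V) (c : V × V) : Prop :=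
  ∀ v w : V, wl2 G.Adj (v, w) c →
    (¬ wl2 G.Adj (v, v) (w, w)) ∧
    (∀ v', wl2 G.Adj (v', w) c → v' = v) ∧
    (∀ w', wl2 G.Adj (v, w') c → w' = w)

/-- `x` and `y` are joined by an edge of color `d` or of the reverse color `d⁻¹`. -/
def dAdj {V : Type} [Fintype V] (G : SimpleGraph V) (d : V × V) (x y : V) : Prop :=
  wl2 G.Adj (x, y) d ∨ wl2 G.Adj (y, x) d

/-- The edge color `c` admits short `d`-connections: two vertices in distinct
connected components of `G[c]` are joined by a path of length at most 2 all of
whose edges have color `d` or `d⁻¹`. -/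
def AdmitsShortConnections {V : Type} [Fintype V] (G : SimpleGraph V) (c d : V × V) : Prop :=
  ∃ v₁ ∈ (colorGraph G c).support, ∃ v₂ ∈ (colorGraph G c).support,
    ¬ (colorGraph G c).Reachable v₁ v₂ ∧
    (dAdj G d v₁ v₂ ∨ ∃ u, dAdj G d v₁ u ∧ dAdj G d u v₂)

/-! ### Orbit determination -/

/-- 2-WL determines pair orbits of `G`. -/
def DeterminesPairOrbits {V : Type} [Fintype V] (G : SimpleGraph V) : Prop :=
  ∀ v₁ v₂ : V, ∀ (W : Type) [Fintype W] (H : SimpleGraph W), ∀ w₁ w₂ : W,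
    wl2Eq G.Adj H.Adj (v₁, v₂) (w₁, w₂) → ∃ φ : G ≃g H, φ v₁ = w₁ ∧ φ v₂ = w₂

/-- 2-WL determines arc orbits of `G`. -/
def DeterminesArcOrbits {V : Type} [Fintype V] (G : SimpleGraph V) : Prop :=
  ∀ v₁ v₂ : V, (v₁ = v₂ ∨ G.Adj v₁ v₂) →
    ∀ (W : Type) [Fintype W] (H : SimpleGraph W), ∀ w₁ w₂ : W, (w₁ = w₂ ∨ H.Adj w₁ w₂) →
    wl2Eq G.Adj H.Adj (v₁, v₂) (w₁, w₂) → ∃ φ : G ≃g H, φ v₁ = w₁ ∧ φ v₂ = w₂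

/-- An isomorphism from the directed graph `A` onto the (symmetric) adjacency
relation of the simple graph `H`. -/
def DigraphIsoTo {V W : Type} (A : V → V → Prop) (H : SimpleGraph W) : Prop :=
  ∃ e : V ≃ W, ∀ v w, A v w ↔ H.Adj (e v) (e w)

/-- 2-WL determines arc orbits of the directed graph `A`. -/
def DigraphDeterminesArcOrbits {V : Type} [Fintype V] (A : V → V → Prop) : Prop :=
  ∀ v₁ v₂ : V, (v₁ = v₂ ∨ A v₁ v₂ ∨ A v₂ v₁) →
    ∀ (W : Type) [Fintype W] (B : W → W → Prop), (∀ w, ¬ B w w) →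
    ∀ w₁ w₂ : W, (w₁ = w₂ ∨ B w₁ w₂ ∨ B w₂ w₁) →
    wl2Eq A B (v₁, v₂) (w₁, w₂) →
    ∃ e : V ≃ W, (∀ x y, A x y ↔ B (e x) (e y)) ∧ e v₁ = w₁ ∧ e v₂ = w₂

/-! ### 2-stable colorings -/

/-- A pair coloring `χ` is 2-stable w.r.t. `G`: it refines `WL²(G)` and is not
strictly refined by one round of 2-WL. -/
def IsTwoStable {V C : Type} [Fintype V] (G : SimpleGraph V) (χ : V × V → C) : Prop :=
  (∀ p q : V × V, χ p = χ q → wl2 G.Adj p q) ∧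
  (∀ p q : V × V, χ p = χ q →
    (Finset.univ.val.map fun u => (χ (u, p.2), χ (p.1, u))) =
    (Finset.univ.val.map fun u => (χ (u, q.2), χ (q.1, u))))

/-- `G[Cs]` for a pair coloring `χ` and a set of colors `Cs` (on the full vertex
set). -/
def chiColorGraph {V C : Type} (G : SimpleGraph V) (χ : V × V → C) (Cs : Set C) :
    SimpleGraph V :=
  SimpleGraph.fromRel fun v w => G.Adj v w ∧ χ (v, w) ∈ Cs

/-! ### Components avoiding a set, neighborhoods of sets -/

/-- The vertex set of the connected component of `z` in `G - A`. -/
def componentWithin {V : Type} (G : SimpleGraph V) (A : Set V) (z : V) : Set V :=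
  {y | ∃ p : G.Walk z y, ∀ u ∈ p.support, u ∉ A}

/-- `N_G(Z)`: the set of vertices outside `Z` having a neighbor in `Z`. -/
def outerNeighborhood {V : Type} (G : SimpleGraph V) (Z : Set V) : Set V :=
  {v | v ∉ Z ∧ ∃ u ∈ Z, G.Adj u v}


/-! ### Polyhedral graphs -/

/-- The tetrahedron graph `K₄`. -/
def tetrahedronGraph : SimpleGraph (Fin 4) := completeGraph (Fin 4)

/-- The cube graph `Q₃`. -/
def cubeGraph : SimpleGraph (Fin 3 → Bool) :=
  SimpleGraph.fromRel fun x y => ∃ i, x i ≠ y i ∧ ∀ j, j ≠ i → x j = y j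

/-- The octahedron graph `K₂,₂,₂`. -/
def octahedronGraph : SimpleGraph (Fin 3 × Fin 2) :=
  SimpleGraph.fromRel fun p q => p.1 ≠ q.1

/-- The dodecahedron graph, realized as the generalized Petersen graph GP(10,2). -/
def dodecahedronGraph : SimpleGraph (Bool × Fin 10) :=
  SimpleGraph.fromRel fun p q =>
    (p.1 = false ∧ q.1 = false ∧ q.2 = p.2 + 1) ∨
    (p.1 = true ∧ q.1 = true ∧ q.2 = p.2 + 2) ∨
    (p.1 ≠ q.1 ∧ p.2 = q.2)

/-- The icosahedron graph, realized as a pentagonal antiprism (the circulant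
`Ci₁₀(1,2)`) capped by two apexes. -/
def icosahedronGraph : SimpleGraph (Fin 10 ⊕ Bool) :=
  SimpleGraph.fromRel fun p q =>
    (∃ i j : Fin 10, p = Sum.inl i ∧ q = Sum.inl j ∧ (j = i + 1 ∨ j = i + 2)) ∨
    (∃ (i : Fin 10) (b : Bool), p = Sum.inl i ∧ q = Sum.inr b ∧ (i.val % 2 = 0 ↔ b = false))

/-- The cuboctahedron graph, realized as the line graph (= medial graph) of the cube. -/
def cuboctahedronGraph : SimpleGraph ↥cubeGraph.edgeSet :=
  SimpleGraph.fromRel fun e f =>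
    ∃ v : Fin 3 → Bool, v ∈ (e : Sym2 (Fin 3 → Bool)) ∧ v ∈ (f : Sym2 (Fin 3 → Bool))

/-- The icosidodecahedron graph, realized as the medial graph of the icosahedron. -/
def icosidodecahedronGraph : SimpleGraph ↥icosahedronGraph.edgeSet :=
  SimpleGraph.fromRel fun e f =>
    ∃ v a b : Fin 10 ⊕ Bool, (e : Sym2 (Fin 10 ⊕ Bool)) = s(v, a) ∧
      (f : Sym2 (Fin 10 ⊕ Bool)) = s(v, b) ∧ icosahedronGraph.Adj a b

/-- The rhombic dodecahedron graph, realized as the vertex-face incidence graph of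
the cube (faces of the cube are indexed by `Fin 3 × Bool`). -/
def rhombicDodecahedronGraph : SimpleGraph ((Fin 3 → Bool) ⊕ (Fin 3 × Bool)) :=
  SimpleGraph.fromRel fun p q =>
    ∃ (x : Fin 3 → Bool) (i : Fin 3) (b : Bool), p = Sum.inl x ∧ q = Sum.inr (i, b) ∧ x i = b

/-- The (triangular) faces of the icosahedron are exactly its 3-cliques. -/
def IcosaFace : Type := {s : Finset (Fin 10 ⊕ Bool) // icosahedronGraph.IsNClique 3 s}

/-- The rhombic triacontahedron graph, realized as the vertex-face incidence graph
of the icosahedron. -/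
def rhombicTriacontahedronGraph : SimpleGraph ((Fin 10 ⊕ Bool) ⊕ IcosaFace) :=
  SimpleGraph.fromRel fun p q =>
    ∃ (v : Fin 10 ⊕ Bool) (t : IcosaFace), p = Sum.inl v ∧ q = Sum.inr t ∧ v ∈ t.val

/-! ### Truncating a set of vertices of a (plane) graph -/

/-- Vertex set after truncating the vertices of `W` in `H`: the untouched old
vertices together with one vertex for every arc emanating from a vertex of `W`. -/
def truncVertexType {V : Type} (H : SimpleGraph V) (W : Set V) : Type :=
  {v : V // v ∉ W} ⊕ {p : V × V // p.1 ∈ W ∧ H.Adj p.1 p.2}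

/-- Adjacency after truncating `W` in `H`.  `ringRel v w w'` tells whether the
neighbors `w, w'` of the truncated vertex `v` are consecutive in the cyclic order
around `v` in the plane embedding (for a degree-3 vertex any two are). -/
def truncAdj {V : Type} (H : SimpleGraph V) (W : Set V) (ringRel : V → V → V → Prop) :
    truncVertexType H W → truncVertexType H W → Prop
  | Sum.inl u, Sum.inl u' => H.Adj u.val u'.val
  | Sum.inl u, Sum.inr p => p.val.2 = u.val
  | Sum.inr p, Sum.inr q =>
      (p.val.1 = q.val.1 ∧ ringRel p.val.1 p.val.2 q.val.2) ∨
      (p.val.2 = q.val.1 ∧ q.val.2 = p.val.1)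
  | _, _ => False

/-- The graph obtained from `H` by truncating every vertex of `W`. -/
def truncateGraph {V : Type} (H : SimpleGraph V) (W : Set V) (ringRel : V → V → V → Prop) :
    SimpleGraph (truncVertexType H W) :=
  SimpleGraph.fromRel (truncAdj H W ringRel)

/-- Ring relation for truncating vertices of degree 3 (all pairs consecutive). -/
def triangleRing {V : Type} : V → V → V → Prop := fun _ _ _ => True

/-- Ring relation when the link of each truncated vertex is an induced cycle
(e.g. in a triangulation): consecutive means adjacent. -/
def linkRing {V : Type} (H : SimpleGraph V) : V → V → V → Prop := fun _ w w' => H.Adj w w'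

/-- Ring relation when any two consecutive neighbors of `v` lie on a common
quadrilateral face: consecutive means having a common neighbor besides `v`. -/
def squareRing {V : Type} (H : SimpleGraph V) : V → V → V → Prop :=
  fun v w w' => ∃ u, u ≠ v ∧ H.Adj w u ∧ H.Adj w' u

def truncatedTetrahedronGraph := truncateGraph tetrahedronGraph Set.univ triangleRing
def truncatedCubeGraph := truncateGraph cubeGraph Set.univ triangleRing
def truncatedOctahedronGraph := truncateGraph octahedronGraph Set.univ (linkRing octahedronGraph)
def truncatedDodecahedronGraph := truncateGraph dodecahedronGraph Set.univ triangleRing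
def truncatedIcosahedronGraph := truncateGraph icosahedronGraph Set.univ (linkRing icosahedronGraph)

/-- The chamfered tetrahedron: truncate one bipartition class of the cube. -/
def chamferedTetrahedronGraph :=
  truncateGraph cubeGraph {x : Fin 3 → Bool | (x 0 ^^ (x 1 ^^ x 2)) = true} triangleRing

/-- The chamfered cube: truncate the degree-4 vertices of the rhombic dodecahedron. -/
def chamferedCubeGraph :=
  truncateGraph rhombicDodecahedronGraph {p | ∃ f, p = Sum.inr f}
    (squareRing rhombicDodecahedronGraph)

/-- The chamfered octahedron: truncate the degree-3 vertices of the rhombic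
dodecahedron. -/
def chamferedOctahedronGraph :=
  truncateGraph rhombicDodecahedronGraph {p | ∃ x, p = Sum.inl x} triangleRing

/-- The chamfered dodecahedron: truncate the degree-5 vertices of the rhombic
triacontahedron. -/
def chamferedDodecahedronGraph :=
  truncateGraph rhombicTriacontahedronGraph {p | ∃ v, p = Sum.inl v}
    (squareRing rhombicTriacontahedronGraph)

/-- The chamfered icosahedron: truncate the degree-3 vertices of the rhombic
triacontahedron. -/
def chamferedIcosahedronGraph :=
  truncateGraph rhombicTriacontahedronGraph {p | ∃ t, p = Sum.inr t} triangleRing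

/-- The rhombicuboctahedron, realized as the expansion (cantellation) of the cube:
vertices are the vertex-face flags of the cube. -/
def rhombicuboctahedronGraph :
    SimpleGraph {p : (Fin 3 → Bool) × (Fin 3 × Bool) // p.1 p.2.1 = p.2.2} :=
  SimpleGraph.fromRel fun a b =>
    (a.val.1 = b.val.1 ∧ a.val.2 ≠ b.val.2) ∨
    (a.val.2 = b.val.2 ∧ cubeGraph.Adj a.val.1 b.val.1)

/-- A pentagon of `H`: a 5-element vertex set inducing a 5-cycle. -/
def IsPentagon {V : Type} (H : SimpleGraph V) (s : Finset V) : Prop :=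
  s.card = 5 ∧ ∀ v ∈ s, ((s : Set V) ∩ H.neighborSet v).ncard = 2

/-- The rhombicosidodecahedron, realized as the expansion (cantellation) of the
dodecahedron: vertices are the vertex-face flags of the dodecahedron (its faces
are exactly its pentagons). -/
def rhombicosidodecahedronGraph :
    SimpleGraph {p : (Bool × Fin 10) × Finset (Bool × Fin 10) //
      IsPentagon dodecahedronGraph p.2 ∧ p.1 ∈ p.2} :=
  SimpleGraph.fromRel fun a b =>
    (a.val.1 = b.val.1 ∧ a.val.2 ≠ b.val.2) ∨
    (a.val.2 = b.val.2 ∧ dodecahedronGraph.Adj a.val.1 b.val.1)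

/-! ### Subdivisions -/

/-- Vertex set of the `f`-subdivision of `H`: old vertices plus `f e` subdivision
vertices for every edge `e`. -/
def subdivVertexType {V : Type} (H : SimpleGraph V) (f : Sym2 V → ℕ) : Type :=
  V ⊕ {x : Sym2 V × ℕ // x.1 ∈ H.edgeSet ∧ x.2 < f x.1}

def subdivAdj {V : Type} (H : SimpleGraph V) (f : Sym2 V → ℕ) :
    subdivVertexType H f → subdivVertexType H f → Prop
  | Sum.inl u, Sum.inl v => H.Adj u v ∧ f s(u, v) = 0
  | Sum.inl u, Sum.inr x => u ∈ x.val.1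
  | _, _ => False

/-- The `f`-subdivision of `H`: each edge `e` is replaced by `f e` parallel paths
of length 2 (edges with `f e = 0` are kept). -/
def parallelSubdivision {V : Type} (H : SimpleGraph V) (f : Sym2 V → ℕ) :
    SimpleGraph (subdivVertexType H f) :=
  SimpleGraph.fromRel (subdivAdj H f)

/-- `G` is (isomorphic to) a parallel subdivision of `H`. -/
def IsParallelSubdivisionOf {α V : Type} (G : SimpleGraph α) (H : SimpleGraph V) : Prop :=
  ∃ f : Sym2 V → ℕ, Nonempty (G ≃g parallelSubdivision H f)

/-- The `s`-subdivision of `H`: every edge is replaced by `s` parallel paths of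
length 2. -/
def sSubdivision {V : Type} (H : SimpleGraph V) (s : ℕ) :
    SimpleGraph (subdivVertexType H (fun _ => s)) :=
  parallelSubdivision H (fun _ => s)

/-- Vertex set of the `C₄`-subdivision of `H`: old vertices, plus two vertices for
each arc of `H`. -/
def c4VertexType {V : Type} (H : SimpleGraph V) : Type :=
  V ⊕ ({p : V × V // H.Adj p.1 p.2} × Bool)

def c4Adj {V : Type} (H : SimpleGraph V) : c4VertexType H → c4VertexType H → Prop
  | Sum.inl v, Sum.inr (a, false) => a.val.1 = v
  | Sum.inr (a, false), Sum.inr (b, true) => a = b ∨ (a.val.1 = b.val.2 ∧ a.val.2 = b.val.1)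
  | _, _ => False

/-- The `C₄`-subdivision of `H`: every edge `vw` is replaced by a 4-cycle attached
to `v` and `w` at opposite vertices. -/
def c4Subdivision {V : Type} (H : SimpleGraph V) : SimpleGraph (c4VertexType H) :=
  SimpleGraph.fromRel (c4Adj H)

/-! ### Cycles, prisms, `C_m^*`, `K_{2,h}^*`, bipyramids -/

/-- The cycle graph on `ZMod m` (for `m ≥ 3`). -/
def cycGraph (m : ℕ) : SimpleGraph (ZMod m) := SimpleGraph.fromRel fun i j => j = i + 1

/-- The `m`-side prism `C_m □ K₂`. -/
def prismGraph (m : ℕ) : SimpleGraph (ZMod m × Fin 2) :=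
  (cycGraph m).boxProd (completeGraph (Fin 2))

/-- The graph `C_m^*`: `m` four-cycles linked in a cyclic fashion. -/
def cmStarGraph (m : ℕ) : SimpleGraph (ZMod m × Fin 4) :=
  SimpleGraph.fromRel fun p q =>
    (p.1 = q.1 ∧ q.2 = p.2 + 1) ∨ (p.2 = 2 ∧ q.2 = 0 ∧ q.1 = p.1 + 1)

/-- The graph `K_{2,h}^*`: `h` disjoint four-cycles, all linked to two extra
vertices at opposite points. -/
def k2hStarGraph (h : ℕ) : SimpleGraph ((Fin h × Fin 4) ⊕ Bool) :=
  SimpleGraph.fromRel fun x y =>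
    (∃ p q : Fin h × Fin 4, x = Sum.inl p ∧ y = Sum.inl q ∧ p.1 = q.1 ∧ q.2 = p.2 + 1) ∨
    (∃ (p : Fin h × Fin 4) (b : Bool), x = Sum.inl p ∧ y = Sum.inr b ∧
      ((b = false ∧ p.2 = 0) ∨ (b = true ∧ p.2 = 2)))

/-- The bipyramid `P*_m`: a cycle of length `m` plus two apexes joined to all of
its vertices. -/
def bipyramidGraph (m : ℕ) : SimpleGraph (ZMod m ⊕ Fin 2) :=
  SimpleGraph.fromRel fun x y =>
    (∃ i j : ZMod m, x = Sum.inl i ∧ y = Sum.inl j ∧ j = i + 1) ∨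
    (∃ (i : ZMod m) (u : Fin 2), x = Sum.inl i ∧ y = Sum.inr u)


/-! ### Contracting the components of `G[c]`, and arc-colored graphs -/

/-- The setoid on `V` whose classes are the connected components of `G[c]`
(and singletons). -/
def contractSetoid {V : Type} [Fintype V] (G : SimpleGraph V) (c : V × V) : Setoid V :=
  (colorGraph G c).reachableSetoid

noncomputable instance contractFintype {V : Type} [Fintype V] (G : SimpleGraph V) (c : V × V) :
    Fintype (Quotient (contractSetoid G c)) :=
  @Quotient.fintype V _ (contractSetoid G c) fun _ _ => Classical.dec _

/-- The quotient graph `G/c` obtained by contracting every connected component of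
`G[c]` to a single vertex. -/
def contractGraph {V : Type} [Fintype V] (G : SimpleGraph V) (c : V × V) :
    SimpleGraph (Quotient (contractSetoid G c)) :=
  SimpleGraph.fromRel fun X Y =>
    ∃ v w : V, Quotient.mk (contractSetoid G c) v = X ∧
      Quotient.mk (contractSetoid G c) w = Y ∧ G.Adj v w

/- The pair coloring `χ/c` of `G/c`: the multiset of `WL²(G)`-colors of the pairs
joining the two contracted classes. -/
open Classical in
noncomputable def contractColor {V : Type} [Fintype V] (G : SimpleGraph V) (c : V × V) :
    Quotient (contractSetoid G c) → Quotient (contractSetoid G c) →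
      Multiset (Quotient (wl2Setoid G.Adj)) :=
  fun X Y =>
    ((Finset.univ (α := V × V)).val.filter fun p =>
        Quotient.mk (contractSetoid G c) p.1 = X ∧ Quotient.mk (contractSetoid G c) p.2 = Y).map
      (Quotient.mk (wl2Setoid G.Adj))

/- The arc coloring associated with a pair coloring `κ`: arcs keep their color,
non-arcs are uncolored. -/
open Classical in
noncomputable def arcColor {V C : Type} (A : V → V → Prop) (κ : V → V → C) :
    V → V → Option C :=
  fun x y => if x = y ∨ A x y then some (κ x y) else none

/-- 2-WL determines arc orbits of the arc-colored graph `(G, κ)`. -/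
def CDeterminesArcOrbits {V C : Type} [Fintype V] (G : SimpleGraph V) (κ : V → V → C) : Prop :=
  ∀ v₁ v₂ : V, (v₁ = v₂ ∨ G.Adj v₁ v₂) →
    ∀ (W : Type) [Fintype W] (H : SimpleGraph W) (κ' : W → W → C),
    ∀ w₁ w₂ : W, (w₁ = w₂ ∨ H.Adj w₁ w₂) →
    wl2EqC G.Adj (arcColor G.Adj κ) H.Adj (arcColor H.Adj κ') (v₁, v₂) (w₁, w₂) →
    ∃ e : V ≃ W, (∀ x y, G.Adj x y ↔ H.Adj (e x) (e y)) ∧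
      (∀ x y, x = y ∨ G.Adj x y → κ x y = κ' (e x) (e y)) ∧ e v₁ = w₁ ∧ e v₂ = w₂

/-- 2-WL determines pair orbits of the arc-colored graph `(G, κ)`. -/
def CDeterminesPairOrbits {V C : Type} [Fintype V] (G : SimpleGraph V) (κ : V → V → C) : Prop :=
  ∀ v₁ v₂ : V,
    ∀ (W : Type) [Fintype W] (H : SimpleGraph W) (κ' : W → W → C),
    ∀ w₁ w₂ : W,
    wl2EqC G.Adj (arcColor G.Adj κ) H.Adj (arcColor H.Adj κ') (v₁, v₂) (w₁, w₂) →
    ∃ e : V ≃ W, (∀ x y, G.Adj x y ↔ H.Adj (e x) (e y)) ∧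
      (∀ x y, x = y ∨ G.Adj x y → κ x y = κ' (e x) (e y)) ∧ e v₁ = w₁ ∧ e v₂ = w₂


/-! ### Development: core counting machinery -/
set_option linter.unusedSectionVars false

open scoped Classical

section Core

variable {V : Type} [Fintype V] {R : V → V → Prop}

private def rnd (R : V → V → Prop) (n : ℕ) (p : V × V) : WLColor Unit n :=
  wlRound R (fun _ _ => ()) n p

private lemma wl2_def {p q : V × V} : wl2 R p q ↔ ∀ n, rnd R n p = rnd R n q := Iff.rfl

private lemma rnd_zero (p : V × V) :
    rnd R 0 p = ((p.1 = p.2 : Prop), (R p.1 p.2 : Prop), (R p.2 p.1 : Prop), ()) := rfl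

private lemma rnd_succ (n : ℕ) (p : V × V) :
    rnd R (n+1) p =
      (rnd R n p, Finset.univ.val.map fun u => (rnd R n (u, p.2), rnd R n (p.1, u))) := rfl

private def Rel (R : V → V → Prop) (n : ℕ) (p q : V × V) : Prop := rnd R n p = rnd R n q

private lemma Rel.of_succ {n : ℕ} {p q : V × V} (h : Rel R (n+1) p q) : Rel R n p q :=
  congrArg Prod.fst h

private lemma Rel.mono {m n : ℕ} (hmn : m ≤ n) {p q : V × V} (h : Rel R n p q) :
    Rel R m p q := by
  induction n with
  | zero => simpa [Nat.le_zero.mp hmn] using h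
  | succ k ih =>
    rcases Nat.lt_or_ge m (k+1) with h' | h'
    · exact ih (Nat.lt_succ_iff.mp h') h.of_succ
    · have : m = k + 1 := le_antisymm hmn h'
      simpa [this] using h

private lemma Rel.multiset_eq {n : ℕ} {p q : V × V} (h : Rel R (n+1) p q) :
    (Finset.univ.val.map fun u => (rnd R n (u, p.2), rnd R n (p.1, u))) =
    (Finset.univ.val.map fun u => (rnd R n (u, q.2), rnd R n (q.1, u))) :=
  congrArg Prod.snd h

private lemma count_eq_aux {n : ℕ} {p q : V × V}
    (hrel : ∀ a b : V × V, Rel R n a b ↔ Rel R (n+1) a b)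
    (hM : (Finset.univ.val.map fun u => (rnd R n (u, p.2), rnd R n (p.1, u))) =
          (Finset.univ.val.map fun u => (rnd R n (u, q.2), rnd R n (q.1, u))))
    (c : WLColor Unit (n+1) × WLColor Unit (n+1))
    (hpos : ∃ u₀ : V, (rnd R (n+1) (u₀, p.2), rnd R (n+1) (p.1, u₀)) = c) :
    Multiset.count c (Finset.univ.val.map fun u => (rnd R (n+1) (u, p.2), rnd R (n+1) (p.1, u))) =
    Multiset.count c (Finset.univ.val.map fun u => (rnd R (n+1) (u, q.2), rnd R (n+1) (q.1, u))) := by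
  obtain ⟨u₀, hu₀⟩ := hpos
  rw [Multiset.count_map, Multiset.count_map]
  have key : ∀ u : V,
      (c = (rnd R (n+1) (u, p.2), rnd R (n+1) (p.1, u))) ↔
      ((rnd R n (u₀, p.2), rnd R n (p.1, u₀)) = (rnd R n (u, p.2), rnd R n (p.1, u))) := by
    intro u
    constructor
    · intro h
      have h' : (rnd R (n+1) (u₀, p.2), rnd R (n+1) (p.1, u₀)) =
          (rnd R (n+1) (u, p.2), rnd R (n+1) (p.1, u)) := hu₀.trans h
      obtain ⟨h1, h2⟩ := Prod.ext_iff.mp h'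
      exact Prod.ext (Rel.of_succ h1) (Rel.of_succ h2)
    · intro h
      obtain ⟨h1, h2⟩ := Prod.ext_iff.mp h
      exact hu₀.symm.trans (congrArg₂ Prod.mk ((hrel _ _).mp h1) ((hrel _ _).mp h2))
  have key2 : ∀ u : V,
      (c = (rnd R (n+1) (u, q.2), rnd R (n+1) (q.1, u))) ↔
      ((rnd R n (u₀, p.2), rnd R n (p.1, u₀)) = (rnd R n (u, q.2), rnd R n (q.1, u))) := by
    intro u
    constructor
    · intro h
      have h' : (rnd R (n+1) (u₀, p.2), rnd R (n+1) (p.1, u₀)) =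
          (rnd R (n+1) (u, q.2), rnd R (n+1) (q.1, u)) := hu₀.trans h
      obtain ⟨h1, h2⟩ := Prod.ext_iff.mp h'
      exact Prod.ext (Rel.of_succ h1) (Rel.of_succ h2)
    · intro h
      obtain ⟨h1, h2⟩ := Prod.ext_iff.mp h
      exact hu₀.symm.trans (congrArg₂ Prod.mk ((hrel _ _).mp h1) ((hrel _ _).mp h2))
  rw [Multiset.filter_congr (fun u _ => key u), Multiset.filter_congr (fun u _ => key2 u),
    ← Multiset.count_map, ← Multiset.count_map, hM]

private lemma rel_step {n : ℕ} (hrel : ∀ a b : V × V, Rel R n a b ↔ Rel R (n+1) a b) :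
    ∀ p q : V × V, Rel R (n+1) p q → Rel R (n+2) p q := by
  intro p q h
  have hM := h.multiset_eq
  show rnd R (n+2) p = rnd R (n+2) q
  rw [rnd_succ, rnd_succ]
  refine Prod.ext h ?_
  show (Finset.univ.val.map fun u => (rnd R (n+1) (u, p.2), rnd R (n+1) (p.1, u))) =
       (Finset.univ.val.map fun u => (rnd R (n+1) (u, q.2), rnd R (n+1) (q.1, u)))
  apply Multiset.ext.mpr
  intro c
  by_cases hp : ∃ u₀ : V, (rnd R (n+1) (u₀, p.2), rnd R (n+1) (p.1, u₀)) = c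
  · exact count_eq_aux hrel hM c hp
  · by_cases hq : ∃ u₀ : V, (rnd R (n+1) (u₀, q.2), rnd R (n+1) (q.1, u₀)) = c
    · exact (count_eq_aux hrel hM.symm c hq).symm
    · have hz : ∀ (F : V → WLColor Unit (n+1) × WLColor Unit (n+1)),
        (∀ u, ¬ (F u = c)) → Multiset.count c (Finset.univ.val.map F) = 0 := by
        intro F hF
        rw [Multiset.count_eq_zero]
        intro hc
        obtain ⟨u, _, hu⟩ := Multiset.mem_map.mp hc
        exact hF u hu
      rw [hz _ (fun u h => hp ⟨u, h⟩), hz _ (fun u h => hq ⟨u, h⟩)]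

private noncomputable def relF (R : V → V → Prop) (n : ℕ) : Finset ((V × V) × (V × V)) :=
  Finset.univ.filter (fun pq => Rel R n pq.1 pq.2)

private lemma relF_subset (n : ℕ) : relF R (n+1) ⊆ relF R n := by
  intro pq h
  simp only [relF, Finset.mem_filter, Finset.mem_univ, true_and] at h ⊢
  exact h.of_succ

private lemma exists_level : ∃ n : ℕ, ∀ p q : V × V, Rel R n p q ↔ Rel R (n+1) p q := by
  by_contra hcon
  push_neg at hcon
  have hlt : ∀ n : ℕ, (relF R (n+1)).card < (relF R n).card := by
    intro n
    obtain ⟨p, q, hpq⟩ := hcon n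
    rcases hpq with ⟨h1, h2⟩ | ⟨h1, h2⟩
    · have hne : relF R (n+1) ≠ relF R n := by
        intro he
        apply h2
        have : (p, q) ∈ relF R (n+1) := by
          rw [he]
          simp only [relF, Finset.mem_filter, Finset.mem_univ, true_and]
          exact h1
        simpa [relF, Finset.mem_filter] using this
      exact Finset.card_lt_card (lt_of_le_of_ne (relF_subset n) hne)
    · exact absurd h2.of_succ h1
  have hle : ∀ n : ℕ, (relF R n).card + n ≤ (relF R 0).card := by
    intro n
    induction n with
    | zero => simp
    | succ k ih =>
      have := hlt k
      omega
  have := hle ((relF R 0).card + 1)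
  omega

private lemma exists_stable :
    ∃ N : ℕ, ∀ p q : V × V, (∀ n, Rel R n p q) ↔ Rel R N p q := by
  obtain ⟨N, hN⟩ := exists_level (R := R)
  have step : ∀ k : ℕ, ∀ p q : V × V, Rel R (N + k) p q ↔ Rel R (N + k + 1) p q := by
    intro k
    induction k with
    | zero => simpa using hN
    | succ j ih =>
      intro p q
      constructor
      · exact fun h => rel_step ih p q h
      · exact Rel.of_succ
  have chain : ∀ k : ℕ, ∀ p q : V × V, Rel R N p q ↔ Rel R (N + k) p q := by
    intro k
    induction k with
    | zero => intro p q; rfl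
    | succ j ih =>
      intro p q
      exact (ih p q).trans (step j p q)
  refine ⟨N, fun p q => ⟨fun h => h N, fun h n => ?_⟩⟩
  rcases Nat.le_total n N with h' | h'
  · exact Rel.mono h' h
  · obtain ⟨k, rfl⟩ := Nat.exists_eq_add_of_le h'
    exact (chain k p q).mp h

private lemma tool {u w v w' : V} (h : wl2 R (u, w) (v, w')) (Q : V × V → V × V → Prop)
    (hQ : ∀ a a' b b' : V × V, wl2 R a a' → wl2 R b b' → Q a b → Q a' b') :
    (Finset.univ.filter fun x => Q (x, w) (u, x)).card =
    (Finset.univ.filter fun x => Q (x, w') (v, x)).card := by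
  obtain ⟨N, hN⟩ := exists_stable (R := R)
  have hrel : Rel R (N+1) (u, w) (v, w') := h (N+1)
  have hM := hrel.multiset_eq
  set P : WLColor Unit N × WLColor Unit N → Prop :=
    fun c => ∃ a b : V × V, rnd R N a = c.1 ∧ rnd R N b = c.2 ∧ Q a b with hP
  have key : ∀ (y z : V) (x : V), (Q (x, y) (z, x)) ↔ P (rnd R N (x, y), rnd R N (z, x)) := by
    intro y z x
    constructor
    · exact fun hq => ⟨(x, y), (z, x), rfl, rfl, hq⟩
    · rintro ⟨a, b, ha, hb, hq⟩
      have hwa : wl2 R a (x, y) := (wl2_def).mpr ((hN a (x, y)).mpr ha)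
      have hwb : wl2 R b (z, x) := (wl2_def).mpr ((hN b (z, x)).mpr hb)
      exact hQ a (x, y) b (z, x) hwa hwb hq
  have cardP : ∀ (y z : V),
      (Finset.univ.filter fun x => Q (x, y) (z, x)).card =
      Multiset.countP P (Finset.univ.val.map fun x => (rnd R N (x, y), rnd R N (z, x))) := by
    intro y z
    rw [Multiset.countP_map]
    have hc : (Finset.univ.filter fun x => Q (x, y) (z, x)).card
        = Multiset.card (Multiset.filter (fun x => Q (x, y) (z, x)) Finset.univ.val) := rfl
    rw [hc]
    congr 1
    exact Multiset.filter_congr (fun x _ => key y z x)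
  rw [cardP w u, cardP w' v, hM]

private lemma tool_exists {u w v w' : V} (h : wl2 R (u, w) (v, w')) (Q : V × V → V × V → Prop)
    (hQ : ∀ a a' b b' : V × V, wl2 R a a' → wl2 R b b' → Q a b → Q a' b')
    (hx : ∃ x, Q (x, w) (u, x)) : ∃ x, Q (x, w') (v, x) := by
  have hcard := tool h Q hQ
  obtain ⟨x, hx⟩ := hx
  have hpos : 0 < (Finset.univ.filter fun x => Q (x, w) (u, x)).card :=
    Finset.card_pos.mpr ⟨x, by simpa using hx⟩
  rw [hcard] at hpos
  obtain ⟨y, hy⟩ := Finset.card_pos.mp hpos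
  exact ⟨y, by simpa using hy⟩

private lemma wl2_refl (p : V × V) : wl2 R p p := fun _ => rfl
private lemma wl2_symm {p q : V × V} (h : wl2 R p q) : wl2 R q p := fun n => (h n).symm
private lemma wl2_trans {p q r : V × V} (h1 : wl2 R p q) (h2 : wl2 R q r) : wl2 R p r :=
  fun n => (h1 n).trans (h2 n)

private lemma wl2_comps {p q : V × V} (h : wl2 R p q) :
    ((p.1 = p.2) = (q.1 = q.2)) ∧ ((R p.1 p.2) = (R q.1 q.2)) ∧ ((R p.2 p.1) = (R q.2 q.1)) := by
  have h0 : rnd R 0 p = rnd R 0 q := h 0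
  rw [rnd_zero, rnd_zero] at h0
  obtain ⟨h1, h234⟩ := Prod.ext_iff.mp h0
  obtain ⟨h2, h34⟩ := Prod.ext_iff.mp h234
  obtain ⟨h3, -⟩ := Prod.ext_iff.mp h34
  exact ⟨h1, h2, h3⟩

private lemma wl2_eq_iff {p q : V × V} (h : wl2 R p q) : p.1 = p.2 ↔ q.1 = q.2 :=
  iff_of_eq (wl2_comps h).1

private lemma wl2_adj_iff {p q : V × V} (h : wl2 R p q) : R p.1 p.2 ↔ R q.1 q.2 :=
  iff_of_eq (wl2_comps h).2.1

private lemma wl2_adj_iff' {p q : V × V} (h : wl2 R p q) : R p.2 p.1 ↔ R q.2 q.1 :=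
  iff_of_eq (wl2_comps h).2.2

private lemma wl2_diag_left {u w v w' : V} (h : wl2 R (u, w) (v, w')) :
    wl2 R (u, u) (v, v) := by
  have hex := tool_exists h (fun _ b => b.1 = b.2 ∧ wl2 R b (u, u))
    (fun a a' b b' _ hb hq =>
      ⟨(wl2_eq_iff hb).mp hq.1, wl2_trans (wl2_symm hb) hq.2⟩)
    ⟨u, rfl, wl2_refl _⟩
  obtain ⟨x, hx1, hx2⟩ := hex
  have hvx : v = x := hx1
  subst hvx
  exact wl2_symm hx2

private lemma wl2_diag_right {u w v w' : V} (h : wl2 R (u, w) (v, w')) :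
    wl2 R (w, w) (w', w') := by
  have hex := tool_exists h (fun a _ => a.1 = a.2 ∧ wl2 R a (w, w))
    (fun a a' b b' ha _ hq =>
      ⟨(wl2_eq_iff ha).mp hq.1, wl2_trans (wl2_symm ha) hq.2⟩)
    ⟨w, rfl, wl2_refl _⟩
  obtain ⟨x, hx1, hx2⟩ := hex
  have hxw : x = w' := hx1
  subst hxw
  exact wl2_symm hx2

private lemma swap_count_aux {n : ℕ}
    (IH : ∀ p q : V × V, rnd R n p = rnd R n q → rnd R n p.swap = rnd R n q.swap)
    {p q : V × V}
    (hM : (Finset.univ.val.map fun u => (rnd R n (u, p.2), rnd R n (p.1, u))) =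
          (Finset.univ.val.map fun u => (rnd R n (u, q.2), rnd R n (q.1, u))))
    (c : WLColor Unit n × WLColor Unit n) :
    Multiset.count c (Finset.univ.val.map fun u => (rnd R n (u, p.1), rnd R n (p.2, u))) ≤
    Multiset.count c (Finset.univ.val.map fun u => (rnd R n (u, q.1), rnd R n (q.2, u))) := by
  by_cases hpos : ∃ u₀ : V, (rnd R n (u₀, p.1), rnd R n (p.2, u₀)) = c
  swap
  · have : Multiset.count c
        (Finset.univ.val.map fun u => (rnd R n (u, p.1), rnd R n (p.2, u))) = 0 := by
      rw [Multiset.count_eq_zero]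
      intro hc
      obtain ⟨u, _, hu⟩ := Multiset.mem_map.mp hc
      exact hpos ⟨u, hu⟩
    simp [this]
  obtain ⟨u₀, hu₀⟩ := hpos
  have swap1 : ∀ (x y x' y' : V), rnd R n (x, y) = rnd R n (x', y') →
      rnd R n (y, x) = rnd R n (y', x') := by
    intro x y x' y' hxy
    exact IH (x, y) (x', y') hxy
  rw [Multiset.count_map, Multiset.count_map]
  have key : ∀ u : V, (c = (rnd R n (u, p.1), rnd R n (p.2, u))) ↔
      ((rnd R n (u₀, p.2), rnd R n (p.1, u₀)) = (rnd R n (u, p.2), rnd R n (p.1, u))) := by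
    intro u
    constructor
    · intro hc
      have he : (rnd R n (u₀, p.1), rnd R n (p.2, u₀)) =
          (rnd R n (u, p.1), rnd R n (p.2, u)) := hu₀.trans hc
      obtain ⟨h1, h2⟩ := Prod.ext_iff.mp he
      exact congrArg₂ Prod.mk (swap1 _ _ _ _ h2) (swap1 _ _ _ _ h1)
    · intro he
      obtain ⟨h1, h2⟩ := Prod.ext_iff.mp he
      have e1 : rnd R n (u₀, p.1) = rnd R n (u, p.1) := swap1 _ _ _ _ h2
      have e2 : rnd R n (p.2, u₀) = rnd R n (p.2, u) := swap1 _ _ _ _ h1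
      exact hu₀.symm.trans (congrArg₂ Prod.mk e1 e2)
  rw [Multiset.filter_congr (fun u _ => key u)]
  have step2 : (Multiset.filter (fun u =>
      (rnd R n (u₀, p.2), rnd R n (p.1, u₀)) = (rnd R n (u, p.2), rnd R n (p.1, u)))
      Finset.univ.val).card =
      Multiset.count (rnd R n (u₀, p.2), rnd R n (p.1, u₀))
        (Finset.univ.val.map fun u => (rnd R n (u, p.2), rnd R n (p.1, u))) := by
    rw [Multiset.count_map]
  rw [step2, hM, Multiset.count_map]
  apply Multiset.card_le_card
  apply Multiset.monotone_filter_right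
  intro u hu
  obtain ⟨h1, h2⟩ := Prod.ext_iff.mp hu
  have e1 : rnd R n (u, q.1) = rnd R n (u₀, p.1) := swap1 _ _ _ _ h2.symm
  have e2 : rnd R n (q.2, u) = rnd R n (p.2, u₀) := swap1 _ _ _ _ h1.symm
  exact hu₀.symm.trans (congrArg₂ Prod.mk e1.symm e2.symm)

private lemma rnd_swap : ∀ (n : ℕ) (p q : V × V), rnd R n p = rnd R n q →
    rnd R n p.swap = rnd R n q.swap := by
  intro n
  induction n with
  | zero =>
    intro p q h
    rw [rnd_zero, rnd_zero] at h
    obtain ⟨h1, h234⟩ := Prod.ext_iff.mp h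
    obtain ⟨h2, h34⟩ := Prod.ext_iff.mp h234
    obtain ⟨h3, -⟩ := Prod.ext_iff.mp h34
    rw [rnd_zero, rnd_zero]
    have e0 : ((p.swap.1 = p.swap.2) : Prop) = ((q.swap.1 = q.swap.2) : Prop) :=
      propext ⟨fun e => ((iff_of_eq h1).mp e.symm).symm,
        fun e => ((iff_of_eq h1).mpr e.symm).symm⟩
    exact congrArg₂ Prod.mk e0 (congrArg₂ Prod.mk h3 (congrArg₂ Prod.mk h2 rfl))
  | succ n IH =>
    intro p q h
    have hn : rnd R n p = rnd R n q := Rel.of_succ h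
    have hM : (Finset.univ.val.map fun u => (rnd R n (u, p.2), rnd R n (p.1, u))) =
        (Finset.univ.val.map fun u => (rnd R n (u, q.2), rnd R n (q.1, u))) :=
      Rel.multiset_eq h
    rw [rnd_succ, rnd_succ]
    refine congrArg₂ Prod.mk (IH p q hn) ?_
    apply Multiset.ext.mpr
    intro c
    exact le_antisymm (swap_count_aux IH hM c) (swap_count_aux IH hM.symm c)

private lemma wl2_swap {p q : V × V} (h : wl2 R p q) : wl2 R p.swap q.swap :=
  fun n => rnd_swap n p q (h n)

end Core

section Graph

open SimpleGraph

variable {V : Type} [Fintype V] {G : SimpleGraph V} {S : Set (V × V)}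

/-- The color-subgraph. -/
private def Hg (S : Set (V × V)) : SimpleGraph V := SimpleGraph.fromRel fun x y => (x, y) ∈ S

private lemma hg_adj {x y : V} : (Hg S).Adj x y ↔ x ≠ y ∧ ((x, y) ∈ S ∨ (y, x) ∈ S) := by
  simp [Hg, SimpleGraph.fromRel_adj]

private lemma hg_le (hedge : ∀ p ∈ S, G.Adj p.1 p.2) : Hg S ≤ G := by
  intro x y h
  rw [hg_adj] at h
  rcases h.2 with h' | h'
  · exact hedge _ h'
  · exact (hedge _ h').symm

private def hr (S : Set (V × V)) (x y : V) : Prop := (Hg S).Reachable x y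

private lemma hr_refl (x : V) : hr S x x := Reachable.refl x
private lemma hr_symm {x y : V} (h : hr S x y) : hr S y x := h.symm
private lemma hr_trans {x y z : V} (h : hr S x y) (h' : hr S y z) : hr S x z := h.trans h'

private def insupp (S : Set (V × V)) (x : V) : Prop := x ∈ (Hg S).support

private lemma insupp_of_adj {x y : V} (h : (Hg S).Adj x y) : insupp S x ∧ insupp S y :=
  ⟨(Hg S).mem_support.mpr ⟨y, h⟩, (Hg S).mem_support.mpr ⟨x, h.symm⟩⟩

private lemma insupp_of_hr {x y : V} (hx : insupp S x) (h : hr S x y) : insupp S y := by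
  obtain ⟨p⟩ := h
  induction p with
  | nil => exact hx
  | cons ha p ih => exact ih (insupp_of_adj ha).2

/-- Bounded H-reachability. -/
private def HR (S : Set (V × V)) : ℕ → V → V → Prop
  | 0 => fun x y => x = y
  | k+1 => fun x y => x = y ∨ ∃ w, (Hg S).Adj x w ∧ HR S k w y

private lemma hr_iff_HR {x y : V} : hr S x y ↔ ∃ k, HR S k x y := by
  constructor
  · intro h
    obtain ⟨p⟩ := h
    refine ⟨p.length, ?_⟩
    induction p with
    | nil => rfl
    | cons ha p ih => exact Or.inr ⟨_, ha, ih⟩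
  · rintro ⟨k, h⟩
    induction k generalizing x with
    | zero => exact h ▸ Reachable.refl x
    | succ k ih =>
      rcases h with rfl | ⟨w, hw, h⟩
      · exact Reachable.refl x
      · exact (hw.reachable).trans (ih h)

/-- Bounded G-paths through non-support vertices. -/
private def ML (G : SimpleGraph V) (S : Set (V × V)) : ℕ → V → V → Prop
  | 0 => fun x y => G.Adj x y
  | k+1 => fun x y => G.Adj x y ∨ ∃ w, G.Adj x w ∧ ¬ insupp S w ∧ ML G S k w y

private lemma ML_snoc {k : ℕ} {x w y : V} (h : ML G S k x w) (hw : ¬ insupp S w)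
    (hadj : G.Adj w y) : ML G S (k+1) x y := by
  induction k generalizing x with
  | zero => exact Or.inr ⟨w, h, hw, hadj⟩
  | succ k ih =>
    rcases h with h | ⟨w', h1, h2, h3⟩
    · exact Or.inr ⟨w, h, hw, Or.inl hadj⟩
    · exact Or.inr ⟨w', h1, h2, ih h3⟩

private lemma ML_symm {k : ℕ} {x y : V} (h : ML G S k x y) : ∃ j, ML G S j y x := by
  induction k generalizing x with
  | zero => exact ⟨0, h.symm⟩
  | succ k ih =>
    rcases h with h | ⟨w, h1, h2, h3⟩
    · exact ⟨0, h.symm⟩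
    · obtain ⟨j, hj⟩ := ih h3
      exact ⟨j + 1, ML_snoc hj h2 h1.symm⟩

private lemma ML_walk {k : ℕ} {x y : V} (h : ML G S k x y) :
    ∃ p : G.Walk x y, ∀ v ∈ p.support, v = x ∨ v = y ∨ ¬ insupp S v := by
  induction k generalizing x with
  | zero =>
    refine ⟨SimpleGraph.Walk.cons (show G.Adj x y from h) SimpleGraph.Walk.nil, ?_⟩
    intro v hv
    simp only [SimpleGraph.Walk.support_cons, SimpleGraph.Walk.support_nil,
      List.mem_cons, List.mem_singleton] at hv
    rcases hv with rfl | rfl | h'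
    · exact Or.inl rfl
    · exact Or.inr (Or.inl rfl)
    · exact absurd h' List.not_mem_nil
  | succ k ih =>
    rcases h with h | ⟨w, h1, h2, h3⟩
    · refine ⟨SimpleGraph.Walk.cons h SimpleGraph.Walk.nil, ?_⟩
      intro v hv
      simp only [SimpleGraph.Walk.support_cons, SimpleGraph.Walk.support_nil,
        List.mem_cons, List.mem_singleton] at hv
      rcases hv with rfl | rfl | h'
      · exact Or.inl rfl
      · exact Or.inr (Or.inl rfl)
      · exact absurd h' List.not_mem_nil
    · obtain ⟨p, hp⟩ := ih h3
      refine ⟨SimpleGraph.Walk.cons h1 p, ?_⟩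
      intro v hv
      simp only [SimpleGraph.Walk.support_cons, List.mem_cons] at hv
      rcases hv with rfl | hv
      · exact Or.inl rfl
      · rcases hp v hv with rfl | h' | h'
        · exact Or.inr (Or.inr h2)
        · exact Or.inr (Or.inl h')
        · exact Or.inr (Or.inr h')

private def mlex (G : SimpleGraph V) (S : Set (V × V)) (x y : V) : Prop := ∃ k, ML G S k x y

private def inner' (G : SimpleGraph V) (S : Set (V × V)) (x' y : V) : Prop :=
  ∃ y', hr S y y' ∧ mlex G S x' y'

private def step' (G : SimpleGraph V) (S : Set (V × V)) (x y : V) : Prop :=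
  insupp S x ∧ insupp S y ∧ ¬ hr S x y ∧ ∃ x', hr S x x' ∧ inner' G S x' y

private lemma step'_symm {x y : V} (h : step' G S x y) : step' G S y x := by
  obtain ⟨hx, hy, hxy, x', hx', y', hy', k, hml⟩ := h
  obtain ⟨j, hj⟩ := ML_symm hml
  exact ⟨hy, hx, fun hc => hxy (hr_symm hc), y', hy', x', hx', j, hj⟩

private lemma step'_hr_left {x x₂ y : V} (h : step' G S x y) (hx : hr S x x₂) :
    step' G S x₂ y := by
  obtain ⟨h1, h2, h3, x', hx', hi⟩ := h
  exact ⟨insupp_of_hr h1 hx, h2, fun hc => h3 (hr_trans hx hc), x',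
    hr_trans (hr_symm hx) hx', hi⟩

private lemma step'_hr_right {x y y₂ : V} (h : step' G S x y) (hy : hr S y y₂) :
    step' G S x y₂ :=
  step'_symm (step'_hr_left (step'_symm h) hy)

/-- Bounded distance in the component graph. -/
private def dk (G : SimpleGraph V) (S : Set (V × V)) : ℕ → V → V → Prop
  | 0 => fun x y => hr S x y
  | k+1 => fun x y => dk G S k x y ∨ ∃ w, step' G S w y ∧ dk G S k x w

private lemma dk_mono {k m : ℕ} (hkm : k ≤ m) {x y : V} (h : dk G S k x y) :
    dk G S m x y := by
  induction m with
  | zero => simpa [Nat.le_zero.mp hkm] using h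
  | succ m ih =>
    rcases Nat.lt_or_ge k (m+1) with h' | h'
    · exact Or.inl (ih (Nat.lt_succ_iff.mp h'))
    · have : k = m + 1 := le_antisymm hkm h'
      subst this
      exact h

private lemma dk_hr_right {k : ℕ} {x y y₂ : V} (h : dk G S k x y) (hy : hr S y y₂) :
    dk G S k x y₂ := by
  induction k generalizing y y₂ with
  | zero => exact hr_trans h hy
  | succ k ih =>
    rcases h with h | ⟨w, hw, h⟩
    · exact Or.inl (ih h hy)
    · exact Or.inr ⟨w, step'_hr_right hw hy, h⟩

private lemma dk_hr_left {k : ℕ} {x x₂ y : V} (h : dk G S k x y) (hx : hr S x x₂) :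
    dk G S k x₂ y := by
  induction k generalizing y with
  | zero => exact hr_trans (hr_symm hx) h
  | succ k ih =>
    rcases h with h | ⟨w, hw, h⟩
    · exact Or.inl (ih h)
    · exact Or.inr ⟨w, hw, ih h⟩

private lemma dk_cons {k : ℕ} {x w y : V} (hs : step' G S x w) (h : dk G S k w y) :
    dk G S (k+1) x y := by
  induction k generalizing y with
  | zero => exact Or.inr ⟨x, step'_hr_right hs h, hr_refl x⟩
  | succ k ih =>
    rcases h with h | ⟨w', hw', h⟩
    · exact Or.inl (ih h)
    · exact Or.inr ⟨w', hw', ih h⟩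

private lemma dk_symm {k : ℕ} {x y : V} (h : dk G S k x y) : dk G S k y x := by
  induction k generalizing x y with
  | zero => exact hr_symm h
  | succ k ih =>
    rcases h with h | ⟨w, hw, h⟩
    · exact Or.inl (ih h)
    · exact dk_cons (step'_symm hw) (ih h)

private lemma dk_trans {a b : ℕ} {x w y : V} (h1 : dk G S a x w) (h2 : dk G S b w y) :
    dk G S (a+b) x y := by
  induction b generalizing y with
  | zero => exact dk_hr_right h1 h2
  | succ b ih =>
    rcases h2 with h2 | ⟨w', hw', h2⟩
    · exact dk_mono (by omega) (ih h2)
    · exact Or.inr ⟨w', hw', ih h2⟩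

/-- Bounded reach towards the support, avoiding the component of `u`. -/
private def QK (G : SimpleGraph V) (S : Set (V × V)) : ℕ → V → V → Prop
  | 0 => fun u x => ¬ hr S u x ∧ insupp S x
  | k+1 => fun u x => ¬ hr S u x ∧ (insupp S x ∨ ∃ w, G.Adj x w ∧ QK G S k u w)

section Resp

variable (hsat : ∀ p ∈ S, ∀ q : V × V, wl2 G.Adj p q → q ∈ S)
include hsat

private lemma smem_resp {p q : V × V} (h : wl2 G.Adj p q) (hp : p ∈ S) : q ∈ S :=
  hsat p hp q h

private lemma hadj_resp {p q : V × V} (h : wl2 G.Adj p q) (hp : (Hg S).Adj p.1 p.2) :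
    (Hg S).Adj q.1 q.2 := by
  rw [hg_adj] at hp ⊢
  refine ⟨fun hc => hp.1 ((wl2_eq_iff h).mpr hc), ?_⟩
  rcases hp.2 with h' | h'
  · exact Or.inl (smem_resp hsat h h')
  · exact Or.inr (smem_resp hsat (wl2_swap h) h')

private lemma insupp_resp {x x' : V} (h : wl2 G.Adj (x, x) (x', x')) (hx : insupp S x) :
    insupp S x' := by
  obtain ⟨y, hy⟩ := (Hg S).mem_support.mp hx
  have hex := tool_exists h (fun _ b => (Hg S).Adj b.1 b.2)
    (fun a a' b b' _ hb hq => hadj_resp hsat hb hq) ⟨y, hy⟩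
  obtain ⟨t, ht⟩ := hex
  exact (Hg S).mem_support.mpr ⟨t, ht⟩

private lemma insupp_iff {x x' : V} (h : wl2 G.Adj (x, x) (x', x')) :
    insupp S x ↔ insupp S x' :=
  ⟨insupp_resp hsat h, insupp_resp hsat (wl2_symm h)⟩

private lemma HR_resp : ∀ (k : ℕ) (x y x' y' : V), wl2 G.Adj (x, y) (x', y') →
    HR S k x y → HR S k x' y' := by
  intro k
  induction k with
  | zero =>
    intro x y x' y' h hk
    exact (wl2_eq_iff h).mp hk
  | succ k ih =>
    intro x y x' y' h hk
    rcases hk with rfl | ⟨w, hw, hk⟩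
    · exact Or.inl ((wl2_eq_iff h).mp rfl)
    · have hex := tool_exists h (fun a b => (Hg S).Adj b.1 b.2 ∧ HR S k a.1 a.2)
        (fun a a' b b' ha hb hq =>
          ⟨hadj_resp hsat hb hq.1, ih a.1 a.2 a'.1 a'.2 ha hq.2⟩)
        ⟨w, hw, hk⟩
      obtain ⟨t, ht1, ht2⟩ := hex
      exact Or.inr ⟨t, ht1, ht2⟩

private lemma hr_resp {x y x' y' : V} (h : wl2 G.Adj (x, y) (x', y')) (hxy : hr S x y) :
    hr S x' y' := by
  obtain ⟨k, hk⟩ := hr_iff_HR.mp hxy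
  exact hr_iff_HR.mpr ⟨k, HR_resp hsat k x y x' y' h hk⟩

private lemma hr_iff_resp {x y x' y' : V} (h : wl2 G.Adj (x, y) (x', y')) :
    hr S x y ↔ hr S x' y' :=
  ⟨hr_resp hsat h, hr_resp hsat (wl2_symm h)⟩

private lemma ML_resp : ∀ (k : ℕ) (x y x' y' : V), wl2 G.Adj (x, y) (x', y') →
    ML G S k x y → ML G S k x' y' := by
  intro k
  induction k with
  | zero =>
    intro x y x' y' h hk
    exact (wl2_adj_iff h).mp hk
  | succ k ih =>
    intro x y x' y' h hk
    rcases hk with hk | ⟨w, h1, h2, h3⟩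
    · exact Or.inl ((wl2_adj_iff h).mp hk)
    · have hex := tool_exists h
        (fun a b => G.Adj b.1 b.2 ∧ ¬ insupp S a.1 ∧ ML G S k a.1 a.2)
        (fun a a' b b' ha hb hq =>
          ⟨(wl2_adj_iff hb).mp hq.1,
           fun hc => hq.2.1 ((insupp_iff hsat (wl2_diag_left ha)).mpr hc),
           ih a.1 a.2 a'.1 a'.2 ha hq.2.2⟩)
        ⟨w, h1, h2, h3⟩
      obtain ⟨t, ht1, ht2, ht3⟩ := hex
      exact Or.inr ⟨t, ht1, ht2, ht3⟩

private lemma mlex_resp {x y x' y' : V} (h : wl2 G.Adj (x, y) (x', y'))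
    (hm : mlex G S x y) : mlex G S x' y' := by
  obtain ⟨k, hk⟩ := hm
  exact ⟨k, ML_resp hsat k x y x' y' h hk⟩

private lemma inner_resp {x y x' y' : V} (h : wl2 G.Adj (x, y) (x', y'))
    (hi : inner' G S x y) : inner' G S x' y' := by
  obtain ⟨t, ht, hm⟩ := hi
  have hex := tool_exists h (fun a b => hr S a.2 a.1 ∧ mlex G S b.1 b.2)
    (fun a a' b b' ha hb hq =>
      ⟨hr_resp hsat (wl2_swap ha) hq.1, mlex_resp hsat hb hq.2⟩)
    ⟨t, ht, hm⟩
  obtain ⟨t', ht1, ht2⟩ := hex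
  exact ⟨t', ht1, ht2⟩

private lemma step_resp {x y x' y' : V} (h : wl2 G.Adj (x, y) (x', y'))
    (hs : step' G S x y) : step' G S x' y' := by
  obtain ⟨h1, h2, h3, t, ht, hi⟩ := hs
  refine ⟨insupp_resp hsat (wl2_diag_left h) h1,
    insupp_resp hsat (wl2_diag_right h) h2,
    fun hc => h3 ((hr_iff_resp hsat h).mpr hc), ?_⟩
  have hex := tool_exists h (fun a b => inner' G S a.1 a.2 ∧ hr S b.1 b.2)
    (fun a a' b b' ha hb hq =>
      ⟨inner_resp hsat ha hq.1, hr_resp hsat hb hq.2⟩)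
    ⟨t, hi, ht⟩
  obtain ⟨t', ht1, ht2⟩ := hex
  exact ⟨t', ht2, ht1⟩

private lemma dk_resp : ∀ (k : ℕ) (x y x' y' : V), wl2 G.Adj (x, y) (x', y') →
    dk G S k x y → dk G S k x' y' := by
  intro k
  induction k with
  | zero =>
    intro x y x' y' h hk
    exact hr_resp hsat h hk
  | succ k ih =>
    intro x y x' y' h hk
    rcases hk with hk | ⟨w, hw, hk⟩
    · exact Or.inl (ih x y x' y' h hk)
    · have hex := tool_exists h (fun a b => step' G S a.1 a.2 ∧ dk G S k b.1 b.2)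
        (fun a a' b b' ha hb hq =>
          ⟨step_resp hsat ha hq.1, ih b.1 b.2 b'.1 b'.2 hb hq.2⟩)
        ⟨w, hw, hk⟩
      obtain ⟨t, ht1, ht2⟩ := hex
      exact Or.inr ⟨t, ht1, ht2⟩

private lemma QK_resp : ∀ (k : ℕ) (x y x' y' : V), wl2 G.Adj (x, y) (x', y') →
    QK G S k x y → QK G S k x' y' := by
  intro k
  induction k with
  | zero =>
    intro x y x' y' h hk
    exact ⟨fun hc => hk.1 ((hr_iff_resp hsat h).mpr hc),
      insupp_resp hsat (wl2_diag_right h) hk.2⟩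
  | succ k ih =>
    intro x y x' y' h hk
    refine ⟨fun hc => hk.1 ((hr_iff_resp hsat h).mpr hc), ?_⟩
    rcases hk.2 with hk2 | ⟨w, hw, hk2⟩
    · exact Or.inl (insupp_resp hsat (wl2_diag_right h) hk2)
    · have hex := tool_exists h (fun a b => G.Adj a.2 a.1 ∧ QK G S k b.1 b.2)
        (fun a a' b b' ha hb hq =>
          ⟨(wl2_adj_iff (wl2_swap ha)).mp hq.1, ih b.1 b.2 b'.1 b'.2 hb hq.2⟩)
        ⟨w, hw, hk2⟩
      obtain ⟨t, ht1, ht2⟩ := hex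
      exact Or.inr ⟨t, ht1, ht2⟩

end Resp

section Dist

variable (hsat : ∀ p ∈ S, ∀ q : V × V, wl2 G.Adj p q → q ∈ S)

/-- class membership -/
private def cmem (G : SimpleGraph V) (s₀ : V) (y : V) : Prop := wl2 G.Adj (y, y) (s₀, s₀)

private lemma filter_card_congr {α : Type} [Fintype α] (p q : α → Prop)
    (ip : DecidablePred p) (iq : DecidablePred q) (h : ∀ y, p y ↔ q y) :
    (@Finset.filter α p ip Finset.univ).card = (@Finset.filter α q iq Finset.univ).card := by
  congr 1
  ext y
  rw [Finset.mem_filter, Finset.mem_filter]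
  exact and_congr_right (fun _ => h y)

include hsat in
private lemma count_c_pred {x x' : V} (h : wl2 G.Adj (x, x) (x', x')) (s₀ : V)
    (P : V → V → Prop) (hP : ∀ u t u' t', wl2 G.Adj (u, t) (u', t') → P u t → P u' t') :
    (Finset.univ.filter fun y => cmem G s₀ y ∧ P x y).card =
    (Finset.univ.filter fun y => cmem G s₀ y ∧ P x' y).card := by
  have ht := tool h (fun a b => cmem G s₀ a.1 ∧ P b.1 b.2)
    (fun a a' b b' ha hb hq =>
      ⟨wl2_trans (wl2_symm (wl2_diag_left ha)) hq.1, hP b.1 b.2 b'.1 b'.2 hb hq.2⟩)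
  exact (filter_card_congr _ _ _ _ (fun y => Iff.rfl)).trans
    (ht.trans (filter_card_congr _ _ _ _ (fun y => Iff.rfl)))

/-- distance in the component graph -/
private noncomputable def dd (G : SimpleGraph V) (S : Set (V × V)) (x y : V) : ℕ :=
  sInf {k | dk G S k x y}

private lemma dd_spec {x y : V} (hne : ∃ k, dk G S k x y) : dk G S (dd G S x y) x y :=
  Nat.sInf_mem hne

private lemma dd_le {k : ℕ} {x y : V} (h : dk G S k x y) : dd G S x y ≤ k :=
  Nat.sInf_le h

private lemma lt_dd_iff {k : ℕ} {x y : V} (hne : ∃ k, dk G S k x y) :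
    k < dd G S x y ↔ ¬ dk G S k x y := by
  constructor
  · intro hlt hdk
    exact absurd (dd_le hdk) (by omega)
  · intro hdk
    by_contra hc
    exact hdk (dk_mono (by omega) (dd_spec hne))

private lemma dd_eq_zero_iff {x y : V} (hne : ∃ k, dk G S k x y) :
    dd G S x y = 0 ↔ hr S x y := by
  constructor
  · intro h
    have := dd_spec hne
    rw [h] at this
    exact this
  · intro h
    exact Nat.le_zero.mp (dd_le (k := 0) h)

/-- helper for global connectivity -/
private def mlrS (G : SimpleGraph V) (S : Set (V × V)) (u w : V) : Prop :=
  ∃ x', hr S u x' ∧ (x' = w ∨ (¬ insupp S w ∧ mlex G S x' w))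

private lemma conn_walk : ∀ {w y : V} (p : G.Walk w y), insupp S y →
    ∀ u, insupp S u → mlrS G S u w → ∃ k, dk G S k u y := by
  intro w y p
  induction p with
  | nil =>
    intro hy u hu hm
    obtain ⟨x', hx', hc⟩ := hm
    rcases hc with rfl | ⟨hns, _⟩
    · exact ⟨0, hx'⟩
    · exact absurd hy hns
  | @cons w t y h q ih =>
    intro hy u hu hm
    obtain ⟨x', hx', hc⟩ := hm
    have hx's : insupp S x' := insupp_of_hr hu hx'
    rcases hc with heq | ⟨hwns, j, hml⟩
    · -- x' = w, so hr u w, and w ∈ supp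
      have huw : hr S u w := heq ▸ hx'
      have hws : insupp S w := insupp_of_hr hu huw
      by_cases ht : insupp S t
      · by_cases hwt : hr S w t
        · exact ih hy u hu ⟨t, hr_trans huw hwt, Or.inl rfl⟩
        · have hst : step' G S w t :=
            ⟨hws, ht, hwt, w, hr_refl w, t, hr_refl t, 0, h⟩
          obtain ⟨k, hk⟩ := ih hy t ht ⟨t, hr_refl t, Or.inl rfl⟩
          exact ⟨k + 1, dk_hr_left (dk_cons hst hk) (hr_symm huw)⟩
      · exact ih hy u hu ⟨w, huw, Or.inr ⟨ht, 0, h⟩⟩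
    · -- w ∉ supp, ML j x' w
      by_cases ht : insupp S t
      · by_cases hxt : hr S x' t
        · exact ih hy u hu ⟨t, hr_trans hx' hxt, Or.inl rfl⟩
        · have hst : step' G S x' t :=
            ⟨hx's, ht, hxt, x', hr_refl x', t, hr_refl t, j + 1, ML_snoc hml hwns h⟩
          obtain ⟨k, hk⟩ := ih hy t ht ⟨t, hr_refl t, Or.inl rfl⟩
          exact ⟨k + 1, dk_hr_left (dk_cons hst hk) (hr_symm hx')⟩
      · exact ih hy u hu ⟨x', hx', Or.inr ⟨ht, j + 1, ML_snoc hml hwns h⟩⟩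

private lemma conn_dk (hconn : G.Connected) {x y : V} (hx : insupp S x) (hy : insupp S y) :
    ∃ k, dk G S k x y := by
  obtain ⟨p⟩ := hconn.preconnected x y
  exact conn_walk p hy x hx ⟨x, hr_refl x, Or.inl rfl⟩

/-- `A`-avoiding version of `dk`. -/
private def dka (G : SimpleGraph V) (S : Set (V × V)) (A : Set V) : ℕ → V → V → Prop
  | 0 => fun x y => hr S x y ∧ y ∉ A
  | k+1 => fun x y => dka G S A k x y ∨ (y ∉ A ∧ ∃ w, step' G S w y ∧ dka G S A k x w)

variable {A : Set V}

private lemma dka_notA {k : ℕ} {x y : V} (h : dka G S A k x y) : y ∉ A := by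
  induction k generalizing y with
  | zero => exact h.2
  | succ k ih =>
    rcases h with h | ⟨hy, _⟩
    · exact ih h
    · exact hy

private lemma dka_hr_right (hA : ∀ u v, u ∈ A → hr S u v → v ∈ A)
    {k : ℕ} {x y y₂ : V} (h : dka G S A k x y) (hy : hr S y y₂) (hy₂ : y₂ ∉ A) :
    dka G S A k x y₂ := by
  induction k generalizing y y₂ with
  | zero => exact ⟨hr_trans h.1 hy, hy₂⟩
  | succ k ih =>
    rcases h with h | ⟨hyA, w, hw, h⟩
    · exact Or.inl (ih h hy hy₂)
    · exact Or.inr ⟨hy₂, w, step'_hr_right hw hy, h⟩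

private lemma dka_cons {k : ℕ} {x w y : V} (hx : x ∉ A) (hs : step' G S x w)
    (h : dka G S A k w y) : dka G S A (k+1) x y := by
  induction k generalizing y with
  | zero => exact Or.inr ⟨h.2, x, step'_hr_right hs h.1, hr_refl x, hx⟩
  | succ k ih =>
    rcases h with h | ⟨hy, w', hw', h⟩
    · exact Or.inl (ih h)
    · exact Or.inr ⟨hy, w', hw', ih h⟩

private lemma dka_symm {k : ℕ} {x y : V} (hx : x ∉ A) (h : dka G S A k x y) :
    dka G S A k y x := by
  induction k generalizing x y with
  | zero => exact ⟨hr_symm h.1, hx⟩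
  | succ k ih =>
    rcases h with h | ⟨hy, w, hw, h⟩
    · exact Or.inl (ih hx h)
    · exact dka_cons hy (step'_symm hw) (ih hx h)

private lemma dka_mono {k m : ℕ} (hkm : k ≤ m) {x y : V} (h : dka G S A k x y) :
    dka G S A m x y := by
  induction m with
  | zero => simpa [Nat.le_zero.mp hkm] using h
  | succ m ih =>
    rcases Nat.lt_or_ge k (m+1) with h' | h'
    · exact Or.inl (ih (Nat.lt_succ_iff.mp h'))
    · have : k = m + 1 := le_antisymm hkm h'
      subst this
      exact h

private lemma dka_trans (hA : ∀ u v, u ∈ A → hr S u v → v ∈ A)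
    {a b : ℕ} {x w y : V} (h1 : dka G S A a x w) (h2 : dka G S A b w y) :
    dka G S A (a+b) x y := by
  induction b generalizing y with
  | zero => exact dka_hr_right hA (dka_mono (by omega) h1) h2.1 h2.2
  | succ b ih =>
    rcases h2 with h2 | ⟨hy, w', hw', h2⟩
    · exact dka_mono (by omega) (ih h2)
    · exact Or.inr ⟨hy, w', hw', ih h2⟩

include hsat in
private lemma claim1
    (hconn : G.Connected)
    {s₀ : V} (hs₀ : insupp S s₀)
    (hldc : ∀ v, insupp S v → ∃ x, hr S v x ∧ cmem G s₀ x)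
    {a : V} (ha : insupp S a) :
    ∀ x y : V, insupp S x → ¬ hr S a x → insupp S y → ¬ hr S a y →
      ∃ k, dka G S {v | hr S a v} k x y := by
  intro x₀ y₀ hx₀s hx₀ hy₀s hy₀
  by_contra hbad
  set A : Set V := {v | hr S a v} with hAdef
  have hA : ∀ u v, u ∈ A → hr S u v → v ∈ A := fun u v hu huv => hr_trans hu huv
  have hmemA : ∀ v, v ∈ A ↔ hr S a v := fun v => Iff.rfl
  -- choose x₁ minimizing the number of class-c vertices in its component of G - A
  have hTne : (Finset.univ.filter fun v => insupp S v ∧ v ∉ A).Nonempty :=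
    ⟨x₀, by simp only [Finset.mem_filter, Finset.mem_univ, true_and]; exact ⟨hx₀s, hx₀⟩⟩
  obtain ⟨x₁, hx₁mem, hx₁min⟩ := Finset.exists_min_image _
    (fun v => (Finset.univ.filter fun y => cmem G s₀ y ∧ ∃ k, dka G S A k v y).card) hTne
  have hx₁mem' : insupp S x₁ ∧ x₁ ∉ A := by
    simpa only [Finset.mem_filter, Finset.mem_univ, true_and] using hx₁mem
  obtain ⟨hx₁s, hx₁A⟩ := hx₁mem'
  -- choose x₂ not connected to x₁ avoiding A
  have hx₂ex : ∃ x₂, insupp S x₂ ∧ x₂ ∉ A ∧ ¬ ∃ k, dka G S A k x₁ x₂ := by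
    by_cases h1 : ∃ k, dka G S A k x₁ x₀
    · refine ⟨y₀, hy₀s, hy₀, fun h2 => hbad ?_⟩
      obtain ⟨j, hj⟩ := h1
      obtain ⟨k, hk⟩ := h2
      exact ⟨j + k, dka_trans hA (dka_symm hx₁A hj) hk⟩
    · exact ⟨x₀, hx₀s, hx₀, h1⟩
  obtain ⟨x₂, hx₂s, hx₂A, hx₂nc⟩ := hx₂ex
  -- find a vertex v₁ in the component of x₁ with a step into A
  have exit1 : ∀ (k : ℕ) (x w : V), x ∉ A → (∃ j, dka G S A j x₁ x) → dk G S k x w →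
      (∃ v u, (∃ j, dka G S A j x₁ v) ∧ step' G S v u ∧ u ∈ A) ∨
      (w ∉ A ∧ ∃ j, dka G S A j x₁ w) := by
    intro k
    induction k with
    | zero =>
      intro x w hx hcx h
      right
      have hw : w ∉ A := fun hwA => hx (hr_trans hwA (hr_symm h))
      obtain ⟨j, hj⟩ := hcx
      exact ⟨hw, j, dka_hr_right hA hj h hw⟩
    | succ k ih =>
      intro x w hx hcx h
      rcases h with h | ⟨u', hu', h⟩
      · exact ih x w hx hcx h
      · rcases ih x u' hx hcx h with hdone | ⟨hu'A, j, hj⟩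
        · exact Or.inl hdone
        · by_cases hwA : w ∈ A
          · exact Or.inl ⟨u', w, ⟨j, hj⟩, hu', hwA⟩
          · exact Or.inr ⟨hwA, j + 1, Or.inr ⟨hwA, u', hu', hj⟩⟩
  have haA : a ∈ A := hr_refl a
  obtain ⟨K, hK⟩ := conn_dk hconn hx₁s ha
  have hexit := exit1 K x₁ a hx₁A ⟨0, hr_refl x₁, hx₁A⟩ hK
  rcases hexit with ⟨v₁, w₁, hv₁c, hstep, hw₁A⟩ | ⟨hc, -⟩
  swap
  · exact hc haA
  have hv₁s : insupp S v₁ := hstep.1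
  have hv₁A : v₁ ∉ A := by obtain ⟨j, hj⟩ := hv₁c; exact dka_notA hj
  obtain ⟨xv, hvxv, hxvc⟩ := hldc v₁ hv₁s
  have hxvA : xv ∉ A := fun hc => hv₁A (hr_trans hc (hr_symm hvxv))
  have hxvconn : ∃ j, dka G S A j x₁ xv := by
    obtain ⟨j, hj⟩ := hv₁c
    exact ⟨j, dka_hr_right hA hj hvxv hxvA⟩
  obtain ⟨xA, haxA, hxAc⟩ := hldc a ha
  have hxAA : xA ∈ A := haxA
  have hweq : wl2 G.Adj (xv, xv) (xA, xA) := wl2_trans hxvc (wl2_symm hxAc)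
  have hstepv : step' G S xv w₁ := step'_hr_left hstep hvxv
  -- the class-c vertex set
  set cset := Finset.univ.filter (cmem G s₀) with hcsetdef
  have hcsupp : ∀ y ∈ cset, insupp S y := by
    intro y hy
    have hy' : cmem G s₀ y := by
      simpa only [hcsetdef, Finset.mem_filter, Finset.mem_univ, true_and] using hy
    exact insupp_resp hsat (wl2_symm hy') hs₀
  have hxvs : insupp S xv := insupp_resp hsat (wl2_symm hxvc) hs₀
  have hxAs : insupp S xA := insupp_resp hsat (wl2_symm hxAc) hs₀
  have hnev : ∀ y ∈ cset, ∃ k, dk G S k xv y := fun y hy => conn_dk hconn hxvs (hcsupp y hy)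
  have hneA : ∀ y ∈ cset, ∃ k, dk G S k xA y := fun y hy => conn_dk hconn hxAs (hcsupp y hy)
  -- bound for distances
  set M := 1 + cset.sup (fun y => max (dd G S xv y) (dd G S xA y)) with hMdef
  have hdltv : ∀ y ∈ cset, dd G S xv y < M := by
    intro y hy
    have := Finset.le_sup (f := fun y => max (dd G S xv y) (dd G S xA y)) hy
    have h2 := le_trans (le_max_left (dd G S xv y) (dd G S xA y)) this
    omega
  have hdltA : ∀ y ∈ cset, dd G S xA y < M := by
    intro y hy
    have := Finset.le_sup (f := fun y => max (dd G S xv y) (dd G S xA y)) hy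
    have h2 := le_trans (le_max_right (dd G S xv y) (dd G S xA y)) this
    omega
  -- sum identity
  have hsum_form : ∀ x : V, (∀ y ∈ cset, dd G S x y < M) →
      ∑ y ∈ cset, dd G S x y =
      ∑ k ∈ Finset.range M, (cset.filter fun y => k < dd G S x y).card := by
    intro x hlt
    have h1 : ∀ y ∈ cset, dd G S x y =
        ∑ k ∈ Finset.range M, if k < dd G S x y then 1 else 0 := by
      intro y hy
      rw [← Finset.card_filter]
      have he : ((Finset.range M).filter fun k => k < dd G S x y)
          = Finset.range (dd G S x y) := by
        ext k
        simp only [Finset.mem_filter, Finset.mem_range]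
        exact ⟨fun h => h.2, fun h => ⟨lt_trans h (hlt y hy), h⟩⟩
      rw [he, Finset.card_range]
    rw [Finset.sum_congr rfl h1, Finset.sum_comm]
    apply Finset.sum_congr rfl
    intro k _
    rw [Finset.card_filter]
  -- per-level count equality
  have hkeq : ∀ k : ℕ, (cset.filter fun y => k < dd G S xv y).card =
      (cset.filter fun y => k < dd G S xA y).card := by
    intro k
    have hform : ∀ x : V, insupp S x →
        (cset.filter fun y => k < dd G S x y)
          = Finset.univ.filter (fun y => cmem G s₀ y ∧ ¬ dk G S k x y) := by
      intro x hxs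
      ext y
      simp only [hcsetdef, Finset.filter_filter, Finset.mem_filter, Finset.mem_univ, true_and]
      constructor
      · rintro ⟨hc, hlt⟩
        refine ⟨hc, ?_⟩
        have hne : ∃ k, dk G S k x y :=
          conn_dk hconn hxs (insupp_resp hsat (wl2_symm hc) hs₀)
        exact (lt_dd_iff hne).mp hlt
      · rintro ⟨hc, hnd⟩
        refine ⟨hc, ?_⟩
        have hne : ∃ k, dk G S k x y :=
          conn_dk hconn hxs (insupp_resp hsat (wl2_symm hc) hs₀)
        exact (lt_dd_iff hne).mpr hnd
    rw [hform xv hxvs, hform xA hxAs]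
    refine (filter_card_congr _ _ _ _ (fun y => Iff.rfl)).trans
      ((count_c_pred hsat hweq s₀ (fun u t => ¬ dk G S k u t)
        (fun u t u' t' hwl hnd hd => hnd (dk_resp hsat k u' t' u t (wl2_symm hwl) hd))).trans
      (filter_card_congr _ _ _ _ (fun y => Iff.rfl)))
  have Tsum : ∑ y ∈ cset, dd G S xv y = ∑ y ∈ cset, dd G S xA y := by
    rw [hsum_form xv hdltv, hsum_form xA hdltA]
    exact Finset.sum_congr rfl (fun k _ => hkeq k)
  -- pass to integers
  set f : V → ℤ := fun y => (dd G S xv y : ℤ) - (dd G S xA y : ℤ) with hfdef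
  have h0 : ∑ y ∈ cset, f y = 0 := by
    have hcast : ∑ y ∈ cset, ((dd G S xv y : ℤ)) = ∑ y ∈ cset, ((dd G S xA y : ℤ)) := by
      rw [← Nat.cast_sum, ← Nat.cast_sum, Tsum]
    rw [hfdef]
    rw [Finset.sum_sub_distrib, hcast, sub_self]
  -- pointwise bounds
  have hboundA : ∀ y ∈ cset, y ∈ A → (1 : ℤ) ≤ f y := by
    intro y hy hyA
    have hdA : dd G S xA y = 0 := by
      have h1 : hr S xA y := hr_trans (hr_symm haxA) hyA
      exact Nat.le_zero.mp (dd_le (k := 0) h1)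
    have hdv : 1 ≤ dd G S xv y := by
      rcases Nat.eq_zero_or_pos (dd G S xv y) with h' | h'
      · exfalso
        have hrv : hr S xv y := (dd_eq_zero_iff (hnev y hy)).mp h'
        exact hxvA (hr_trans hyA (hr_symm hrv))
      · exact h'
    rw [hfdef]
    simp only [hdA, Nat.cast_zero, sub_zero]
    exact_mod_cast hdv
  have hbound1 : ∀ y ∈ cset, (-1 : ℤ) ≤ f y := by
    intro y hy
    have hdk1 : dk G S 1 xA xv :=
      Or.inr ⟨w₁, step'_symm hstepv, hr_trans (hr_symm haxA) hw₁A⟩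
    have h2 : dk G S (1 + dd G S xv y) xA y := dk_trans hdk1 (dd_spec (hnev y hy))
    have h3 : dd G S xA y ≤ 1 + dd G S xv y := dd_le h2
    simp only [hfdef]
    have : (dd G S xA y : ℤ) ≤ 1 + dd G S xv y := by exact_mod_cast h3
    omega
  -- exit lemma no. 2
  have exit2 : ∀ (k : ℕ) (x y : V), x ∉ A → (∃ j, dka G S A j x₁ x) → dk G S k x y →
      (y ∉ A ∧ ∃ j, dka G S A j x₁ y) ∨ (∃ j u, u ∈ A ∧ dk G S j u y ∧ j + 1 ≤ k) := by
    intro k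
    induction k with
    | zero =>
      intro x y hx hcx h
      left
      have hy : y ∉ A := fun hyA => hx (hr_trans hyA (hr_symm h))
      obtain ⟨j, hj⟩ := hcx
      exact ⟨hy, j, dka_hr_right hA hj h hy⟩
    | succ k ih =>
      intro x y hx hcx h
      rcases h with h | ⟨w, hw, h⟩
      · rcases ih x y hx hcx h with h' | ⟨j, u, h1, h2, h3⟩
        · exact Or.inl h'
        · exact Or.inr ⟨j, u, h1, h2, by omega⟩
      · rcases ih x w hx hcx h with ⟨hwA, j, hj⟩ | ⟨j, u, h1, h2, h3⟩
        · by_cases hyA : y ∈ A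
          · exact Or.inr ⟨0, y, hyA, hr_refl y, by omega⟩
          · exact Or.inl ⟨hyA, j + 1, Or.inr ⟨hyA, w, hw, hj⟩⟩
        · exact Or.inr ⟨j + 1, u, h1, Or.inr ⟨w, hw, h2⟩, by omega⟩
  have hbound2 : ∀ y ∈ cset, y ∉ A → ¬ (∃ j, dka G S A j x₁ y) → (1 : ℤ) ≤ f y := by
    intro y hy hyA hync
    rcases exit2 (dd G S xv y) xv y hxvA hxvconn (dd_spec (hnev y hy)) with
      ⟨-, hconn'⟩ | ⟨j, u, huA, hdk, hle⟩
    · exact absurd hconn' hync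
    · have hdkA : dk G S j xA y := dk_hr_left hdk (hr_trans (hr_symm huA) haxA)
      have h3 : dd G S xA y ≤ j := dd_le hdkA
      simp only [hfdef]
      have h4 : (dd G S xA y : ℤ) ≤ j := by exact_mod_cast h3
      have h5 : (j : ℤ) + 1 ≤ dd G S xv y := by exact_mod_cast hle
      omega
  -- split the sum
  set sA := cset.filter (fun y => y ∈ A) with hsA
  set sN := cset.filter (fun y => ¬ y ∈ A) with hsN
  set s1 := sN.filter (fun y => ∃ j, dka G S A j x₁ y) with hs1
  set s2 := sN.filter (fun y => ¬ ∃ j, dka G S A j x₁ y) with hs2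
  have hsplit1 : ∑ y ∈ sA, f y + ∑ y ∈ sN, f y = ∑ y ∈ cset, f y :=
    Finset.sum_filter_add_sum_filter_not cset _ f
  have hsplit2 : ∑ y ∈ s1, f y + ∑ y ∈ s2, f y = ∑ y ∈ sN, f y :=
    Finset.sum_filter_add_sum_filter_not sN _ f
  have hbA : (sA.card : ℤ) ≤ ∑ y ∈ sA, f y := by
    have h1 : ∀ y ∈ sA, (1 : ℤ) ≤ f y := by
      intro y hy
      rw [hsA, Finset.mem_filter] at hy
      exact hboundA y hy.1 hy.2
    calc (sA.card : ℤ) = ∑ _y ∈ sA, (1 : ℤ) := by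
          rw [Finset.sum_const, nsmul_eq_mul, mul_one]
      _ ≤ ∑ y ∈ sA, f y := Finset.sum_le_sum h1
  have hb1 : -(s1.card : ℤ) ≤ ∑ y ∈ s1, f y := by
    have h1 : ∀ y ∈ s1, (-1 : ℤ) ≤ f y := by
      intro y hy
      rw [hs1, Finset.mem_filter, hsN, Finset.mem_filter] at hy
      exact hbound1 y hy.1.1
    calc -(s1.card : ℤ) = ∑ _y ∈ s1, (-1 : ℤ) := by
          rw [Finset.sum_const, nsmul_eq_mul, mul_neg_one]
      _ ≤ ∑ y ∈ s1, f y := Finset.sum_le_sum h1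
  have hb2 : (s2.card : ℤ) ≤ ∑ y ∈ s2, f y := by
    have h1 : ∀ y ∈ s2, (1 : ℤ) ≤ f y := by
      intro y hy
      rw [hs2, Finset.mem_filter, hsN, Finset.mem_filter] at hy
      exact hbound2 y hy.1.1 hy.1.2 hy.2
    calc (s2.card : ℤ) = ∑ _y ∈ s2, (1 : ℤ) := by
          rw [Finset.sum_const, nsmul_eq_mul, mul_one]
      _ ≤ ∑ y ∈ s2, f y := Finset.sum_le_sum h1
  have hineq : (s1.card : ℤ) ≥ (sA.card : ℤ) + s2.card := by
    have := h0
    rw [← hsplit1, ← hsplit2] at this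
    omega
  -- xA witnesses sA nonempty
  have hxAsA : xA ∈ sA := by
    rw [hsA, Finset.mem_filter, hcsetdef, Finset.mem_filter]
    exact ⟨⟨Finset.mem_univ xA, hxAc⟩, hxAA⟩
  have hsApos : 1 ≤ sA.card := Finset.card_pos.mpr ⟨xA, hxAsA⟩
  -- s1 is the phi-set of x₁
  have hs1card : s1.card =
      (Finset.univ.filter fun y => cmem G s₀ y ∧ ∃ k, dka G S A k x₁ y).card := by
    congr 1
    ext y
    simp only [hs1, hsN, hcsetdef, Finset.mem_filter, Finset.mem_univ, true_and]
    constructor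
    · rintro ⟨⟨hc, hnA⟩, hj⟩
      exact ⟨hc, hj⟩
    · rintro ⟨hc, hj⟩
      obtain ⟨j, hjj⟩ := hj
      exact ⟨⟨hc, dka_notA hjj⟩, j, hjj⟩
  -- the phi-set of x₂ is inside s2
  have hs2sub : (Finset.univ.filter fun y => cmem G s₀ y ∧ ∃ k, dka G S A k x₂ y) ⊆ s2 := by
    intro y hy
    rw [Finset.mem_filter] at hy
    obtain ⟨-, hc, j, hj⟩ := hy
    rw [hs2, Finset.mem_filter, hsN, Finset.mem_filter, hcsetdef, Finset.mem_filter]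
    have hyA : y ∉ A := dka_notA hj
    refine ⟨⟨⟨Finset.mem_univ y, hc⟩, hyA⟩, ?_⟩
    rintro ⟨i, hi⟩
    exact hx₂nc ⟨i + j, dka_trans hA hi (dka_symm hx₂A hj)⟩
  have hs2ge : (Finset.univ.filter fun y => cmem G s₀ y ∧ ∃ k, dka G S A k x₂ y).card ≤
      s2.card := Finset.card_le_card hs2sub
  have hmin := hx₁min x₂ (by
    simp only [Finset.mem_filter, Finset.mem_univ, true_and]
    exact ⟨hx₂s, hx₂A⟩)
  rw [← hs1card] at hmin
  omega

end Dist

section Walks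

private lemma hr_walk_avoid (hedge : ∀ p ∈ S, G.Adj p.1 p.2) {A : Set V}
    (hA : ∀ u v, u ∈ A → hr S u v → v ∈ A) :
    ∀ {x y : V}, (Hg S).Walk x y → x ∉ A →
    ∃ p : G.Walk x y, ∀ v ∈ p.support, v ∉ A := by
  intro x y q
  induction q with
  | nil =>
    intro hx
    refine ⟨SimpleGraph.Walk.nil, ?_⟩
    intro v hv
    simp only [SimpleGraph.Walk.support_nil, List.mem_singleton] at hv
    subst hv
    exact hx
  | @cons u w y ha q ih =>
    intro hx
    have hw : w ∉ A := fun hwA => hx (hA _ _ hwA (hr_symm ha.reachable))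
    obtain ⟨p, hp⟩ := ih hw
    refine ⟨SimpleGraph.Walk.cons (hg_le hedge ha) p, ?_⟩
    intro v hv
    simp only [SimpleGraph.Walk.support_cons, List.mem_cons] at hv
    rcases hv with rfl | hv
    · exact hx
    · exact hp v hv

private lemma step_walk_avoid (hedge : ∀ p ∈ S, G.Adj p.1 p.2) {A : Set V}
    (hA : ∀ u v, u ∈ A → hr S u v → v ∈ A) (hAs : ∀ v ∈ A, insupp S v)
    {x y : V} (hs : step' G S x y) (hx : x ∉ A) (hy : y ∉ A) :
    ∃ p : G.Walk x y, ∀ v ∈ p.support, v ∉ A := by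
  obtain ⟨hxs, hys, hxy, x', hx', y', hy', k, hml⟩ := hs
  have hx'A : x' ∉ A := fun hc => hx (hA _ _ hc (hr_symm hx'))
  have hy'A : y' ∉ A := fun hc => hy (hA _ _ hc (hr_symm hy'))
  obtain ⟨q1⟩ := hx'
  obtain ⟨p1, hp1⟩ := hr_walk_avoid hedge hA q1 hx
  obtain ⟨p2, hp2⟩ := ML_walk hml
  obtain ⟨q3⟩ := hy'
  obtain ⟨p3, hp3⟩ := hr_walk_avoid hedge hA q3 hy
  refine ⟨(p1.append p2).append p3.reverse, ?_⟩
  intro v hv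
  rw [SimpleGraph.Walk.mem_support_append_iff,
    SimpleGraph.Walk.mem_support_append_iff] at hv
  rcases hv with (hv | hv) | hv
  · exact hp1 v hv
  · rcases hp2 v hv with rfl | rfl | hns
    · exact hx'A
    · exact hy'A
    · exact fun hc => hns (hAs v hc)
  · rw [SimpleGraph.Walk.support_reverse, List.mem_reverse] at hv
    exact hp3 v hv

private lemma dka_walk (hedge : ∀ p ∈ S, G.Adj p.1 p.2) {A : Set V}
    (hA : ∀ u v, u ∈ A → hr S u v → v ∈ A) (hAs : ∀ v ∈ A, insupp S v) :
    ∀ (k : ℕ) {x y : V}, x ∉ A → dka G S A k x y →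
    ∃ p : G.Walk x y, ∀ v ∈ p.support, v ∉ A := by
  intro k
  induction k with
  | zero =>
    intro x y hx h
    obtain ⟨q⟩ := h.1
    exact hr_walk_avoid hedge hA q hx
  | succ k ih =>
    intro x y hx h
    rcases h with h | ⟨hy, w, hw, h⟩
    · exact ih hx h
    · obtain ⟨p1, hp1⟩ := ih hx h
      have hwA : w ∉ A := dka_notA h
      obtain ⟨p2, hp2⟩ := step_walk_avoid hedge hA hAs hw hwA hy
      refine ⟨p1.append p2, ?_⟩
      intro v hv
      rw [SimpleGraph.Walk.mem_support_append_iff] at hv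
      rcases hv with hv | hv
      · exact hp1 v hv
      · exact hp2 v hv

private lemma QK_of_walk {A : Set V} {u : V} (hu : ∀ v, hr S u v ↔ v ∈ A) :
    ∀ {x z : V} (p : G.Walk x z), (∀ v ∈ p.support, v ∉ A) → insupp S z →
    QK G S p.length u x := by
  intro x z p
  induction p with
  | nil =>
    intro hp hz
    exact ⟨fun hc => hp _ (SimpleGraph.Walk.start_mem_support _) ((hu _).mp hc), hz⟩
  | @cons x w z ha p ih =>
    intro hp hz
    refine ⟨fun hc => hp _ (SimpleGraph.Walk.start_mem_support _) ((hu _).mp hc),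
      Or.inr ⟨w, ha, ih ?_ hz⟩⟩
    intro v hv
    apply hp v
    simp only [SimpleGraph.Walk.support_cons, List.mem_cons]
    exact Or.inr hv

private lemma QK_target {A : Set V} {u : V} (hu : ∀ v, hr S u v ↔ v ∈ A) :
    ∀ (k : ℕ) {x : V}, QK G S k u x →
    ∃ z, insupp S z ∧ z ∉ A ∧ ∃ p : G.Walk x z, ∀ v ∈ p.support, v ∉ A := by
  intro k
  induction k with
  | zero =>
    intro x h
    refine ⟨x, h.2, fun hc => h.1 ((hu _).mpr hc), SimpleGraph.Walk.nil, ?_⟩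
    intro v hv
    simp only [SimpleGraph.Walk.support_nil, List.mem_singleton] at hv
    subst hv
    exact fun hc => h.1 ((hu _).mpr hc)
  | succ k ih =>
    intro x h
    obtain ⟨hnr, hor⟩ := h
    rcases hor with hxs | ⟨w, haxw, hq⟩
    · refine ⟨x, hxs, fun hc => hnr ((hu _).mpr hc), SimpleGraph.Walk.nil, ?_⟩
      intro v hv
      simp only [SimpleGraph.Walk.support_nil, List.mem_singleton] at hv
      subst hv
      exact fun hc => hnr ((hu _).mpr hc)
    · obtain ⟨z, hz1, hz2, p, hp⟩ := ih hq
      refine ⟨z, hz1, hz2, SimpleGraph.Walk.cons haxw p, ?_⟩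
      intro v hv
      simp only [SimpleGraph.Walk.support_cons, List.mem_cons] at hv
      rcases hv with rfl | hv
      · exact fun hc => hnr ((hu _).mpr hc)
      · exact hp v hv

private lemma reach_onSupport :
    ∀ {x y : V} (q : (Hg S).Walk x y) (hx : x ∈ (Hg S).support) (hy : y ∈ (Hg S).support),
    (onSupport (Hg S)).Reachable ⟨x, hx⟩ ⟨y, hy⟩ := by
  intro x y q
  induction q with
  | nil =>
    intro hx hy
    exact SimpleGraph.Reachable.refl _
  | @cons u w y ha q ih =>
    intro hx hy
    have hws : w ∈ (Hg S).support := (insupp_of_adj ha).2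
    have hadj : (onSupport (Hg S)).Adj ⟨u, hx⟩ ⟨w, hws⟩ := ha
    exact hadj.reachable.trans (ih hws hy)

end Walks

end Graph

/-- Let `G` be a connected graph, `χ = WL²(G)`, and let `S` be
a locally determined set of edge colors (represented as a `wl2`-saturated set of
adjacent pairs) such that `G[S]` is disconnected.  For the vertex set
`A = compVerts _ a` of any connected component of `G[S]` there are a
`χ`-invariant set `Wset` and the vertex set `Z` of a connected component of
`G − A` with `V(G[S]) ∖ A ⊆ Z` and `N_G(Z) = Wset ∩ A`. -/
theorem statement_18 {V : Type} [Fintype V] (G : SimpleGraph V) (hconn : G.Connected)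
    (S : Set (V × V))
    (hedge : ∀ p ∈ S, G.Adj p.1 p.2)
    (hsat : ∀ p ∈ S, ∀ q : V × V, wl2 G.Adj p q → q ∈ S)
    (hld : ∀ p ∈ S, ∀ v ∈ (SimpleGraph.fromRel fun x y => (x, y) ∈ S).support,
      ∃ x y : V, wl2 G.Adj (x, y) p ∧
        (SimpleGraph.fromRel fun x y => (x, y) ∈ S).Reachable v x)
    (hdisc : ¬ (onSupport (SimpleGraph.fromRel fun x y => (x, y) ∈ S)).Connected)
    (a : V) (ha : a ∈ (SimpleGraph.fromRel fun x y => (x, y) ∈ S).support) :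
    ∃ Wset : Set V,
      (∀ v ∈ Wset, ∀ w : V, wl2 G.Adj (v, v) (w, w) → w ∈ Wset) ∧
      ∃ z : V, z ∉ compVerts (SimpleGraph.fromRel fun x y => (x, y) ∈ S) a ∧
        ((SimpleGraph.fromRel fun x y => (x, y) ∈ S).support \
            compVerts (SimpleGraph.fromRel fun x y => (x, y) ∈ S) a ⊆
          componentWithin G (compVerts (SimpleGraph.fromRel fun x y => (x, y) ∈ S) a) z) ∧
        outerNeighborhood G
            (componentWithin G (compVerts (SimpleGraph.fromRel fun x y => (x, y) ∈ S) a) z) =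
          Wset ∩ compVerts (SimpleGraph.fromRel fun x y => (x, y) ∈ S) a := by
  classical
  -- basic abbreviations (all definitional)
  have has : insupp S a := ha
  set A : Set V := compVerts (SimpleGraph.fromRel fun x y : V => (x, y) ∈ S) a with hAdef
  have hAset : ∀ v, v ∈ A ↔ hr S a v := fun v => Iff.rfl
  have hAcl : ∀ u v, u ∈ A → hr S u v → v ∈ A := fun u v hu huv => hr_trans hu huv
  have hAs : ∀ v ∈ A, insupp S v := fun v hv => insupp_of_hr has hv
  -- choose an arc p₀ of S with tail in A
  obtain ⟨t, hat⟩ := (Hg S).mem_support.mp has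
  have hS0 : ∃ p₀ ∈ S, hr S a p₀.1 := by
    have hat' := hg_adj.mp hat
    rcases hat'.2 with h' | h'
    · exact ⟨(a, t), h', hr_refl a⟩
    · exact ⟨(t, a), h', hat.reachable⟩
  obtain ⟨p₀, hp₀S, hap₀⟩ := hS0
  have hs₀supp : insupp S p₀.1 := by
    have hadj : (Hg S).Adj p₀.1 p₀.2 :=
      hg_adj.mpr ⟨(hedge p₀ hp₀S).ne, Or.inl (by simpa using hp₀S)⟩
    exact (insupp_of_adj hadj).1
  -- local determination, reformulated
  have hldc : ∀ v, insupp S v → ∃ x, hr S v x ∧ cmem G p₀.1 x := by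
    intro v hv
    obtain ⟨x, y, hwlxy, hreach⟩ := hld p₀ hp₀S v hv
    exact ⟨x, hreach, wl2_diag_left hwlxy⟩
  -- a support vertex outside A
  have hbex : ∃ b, insupp S b ∧ b ∉ A := by
    by_contra hc
    push_neg at hc
    apply hdisc
    rw [SimpleGraph.connected_iff]
    refine ⟨?_, ⟨⟨a, has⟩⟩⟩
    intro s t
    have h1 : hr S a s.1 := hc s.1 s.2
    have h2 : hr S a t.1 := hc t.1 t.2
    obtain ⟨q⟩ := hr_trans (hr_symm h1) h2
    have := reach_onSupport q s.2 t.2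
    exact this
  obtain ⟨b, hbs, hbA⟩ := hbex
  -- full claim 1
  have hclaim : ∀ x y : V, insupp S x → x ∉ A → insupp S y → y ∉ A →
      ∃ k, dka G S A k x y := by
    intro x y hx hxA hy hyA
    exact claim1 hsat hconn hs₀supp hldc has x y hx hxA hy hyA
  set Z := componentWithin G A b with hZdef
  -- members of Z avoid A
  have hZA : ∀ y ∈ Z, y ∉ A := by
    rintro y ⟨p, hp⟩
    exact hp y (SimpleGraph.Walk.end_mem_support p)
  -- every support vertex outside A is in Z
  have hsuppZ : ∀ y, insupp S y → y ∉ A → y ∈ Z := by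
    intro y hy hyA
    obtain ⟨k, hk⟩ := hclaim b y hbs hbA hy hyA
    exact dka_walk hedge hAcl hAs k hbA hk
  -- Z is closed under G-edges outside A
  have hZext : ∀ x ∈ Z, ∀ u, G.Adj x u → u ∉ A → u ∈ Z := by
    rintro x ⟨p, hp⟩ u hadj huA
    refine ⟨p.concat hadj, ?_⟩
    intro v hv
    rw [SimpleGraph.Walk.support_concat, List.mem_append] at hv
    rcases hv with hv | hv
    · exact hp v hv
    · simp only [List.mem_singleton] at hv
      subst hv
      exact huA
  -- Z is closed under A-avoiding walks
  have hZwalk : ∀ x ∈ Z, ∀ {y : V} (p : G.Walk x y), (∀ v ∈ p.support, v ∉ A) → y ∈ Z := by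
    rintro x ⟨p, hp⟩ y q hq
    refine ⟨p.append q, ?_⟩
    intro v hv
    rw [SimpleGraph.Walk.mem_support_append_iff] at hv
    rcases hv with hv | hv
    · exact hp v hv
    · exact hq v hv
  -- the outer neighborhood is inside A
  have hNZA : ∀ u ∈ outerNeighborhood G Z, u ∈ A := by
    rintro u ⟨huZ, x, hxZ, hadj⟩
    by_contra huA
    exact huZ (hZext x hxZ u hadj huA)
  refine ⟨{w | ∃ u ∈ outerNeighborhood G Z, wl2 G.Adj (u, u) (w, w)}, ?_, b, hbA, ?_, ?_⟩
  · rintro v ⟨u, hu, hwl⟩ w hw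
    exact ⟨u, hu, wl2_trans hwl hw⟩
  · intro y hy
    exact hsuppZ y hy.1 hy.2
  · apply Set.ext
    intro u
    constructor
    · intro hu
      exact ⟨⟨u, hu, wl2_refl _⟩, hNZA u hu⟩
    · rintro ⟨⟨u', hu', hwl⟩, huA⟩
      have hu'A : u' ∈ A := hNZA u' hu'
      have hu'prop : ∀ v, hr S u' v ↔ v ∈ A :=
        fun v => ⟨fun h => hAcl _ _ hu'A h, fun h => hr_trans (hr_symm hu'A) h⟩
      have huprop : ∀ v, hr S u v ↔ v ∈ A :=
        fun v => ⟨fun h => hAcl _ _ huA h, fun h => hr_trans (hr_symm huA) h⟩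
      -- u' has a neighbor admitting a QK-certificate
      have hRu' : ∃ x, G.Adj u' x ∧ ∃ k, QK G S k u' x := by
        obtain ⟨hu'Z, x, hxZ, hadj⟩ := hu'
        obtain ⟨p, hp⟩ := hxZ
        refine ⟨x, hadj.symm, p.reverse.length, ?_⟩
        apply QK_of_walk hu'prop p.reverse ?_ hbs
        intro v hv
        rw [SimpleGraph.Walk.support_reverse, List.mem_reverse] at hv
        exact hp v hv
      -- transfer along the color equality
      have hRu : ∃ x, G.Adj u x ∧ ∃ k, QK G S k u x := by
        have hex := tool_exists hwl (fun _ b2 => G.Adj b2.1 b2.2 ∧ ∃ k, QK G S k b2.1 b2.2)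
          (fun a1 a1' b1 b1' _ hb hq =>
            ⟨(wl2_adj_iff hb).mp hq.1,
             by
               obtain ⟨k, hk⟩ := hq.2
               exact ⟨k, QK_resp hsat k b1.1 b1.2 b1'.1 b1'.2 hb hk⟩⟩)
          hRu'
        obtain ⟨x, hx1, hx2⟩ := hex
        exact ⟨x, hx1, hx2⟩
      obtain ⟨x, hadj, k, hQK⟩ := hRu
      have hxA : x ∉ A := by
        intro hc
        have : ¬ hr S u x := by
          cases k with
          | zero => exact hQK.1
          | succ k => exact hQK.1
        exact this ((huprop x).mpr hc)
      obtain ⟨z', hz's, hz'A, q, hq⟩ := QK_target huprop k hQK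
      have hz'Z : z' ∈ Z := hsuppZ z' hz's hz'A
      have hxZ : x ∈ Z := by
        obtain ⟨p, hp⟩ := hz'Z
        refine ⟨p.append q.reverse, ?_⟩
        intro v hv
        rw [SimpleGraph.Walk.mem_support_append_iff] at hv
        rcases hv with hv | hv
        · exact hp v hv
        · rw [SimpleGraph.Walk.support_reverse, List.mem_reverse] at hv
          exact hq v hv
      have huZ : u ∉ Z := fun hc => (hZA u hc) huA
      exact ⟨huZ, x, hxZ, hadj.symm⟩

end WL
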